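/- arXiv:1903.09011 — 2 statements merged into one kernel-verified Lean document; each statement's English description precedes it below -/
import Mathlib

section
/- Let G be a weakly 5-edge-connected graph with at least 6 vertices and no K_{3,3} immersion, minimal in edge count among such non-3-regular-planar graphs on the same vertex count. Then no edge of G has multiplicity greater than three. -/
/-- A finite multigraph without loops: vertices `V`, edges `E`,
each edge has an unordered pair of distinct endpoints. -/
structure Multigraph where
  V : Type
  E : Type
  [fV : Fintype V]
  [fE : Fintype E]
  [dV : DecidableEq V]
  [dE : DecidableEq E]
  ends : E → Sym2 V
  noLoop : ∀ e, ¬ (ends e).IsDiag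

attribute [instance] Multigraph.fV Multigraph.fE Multigraph.dV Multigraph.dE

namespace Multigraph

/-- Walks in a multigraph. -/
inductive Walk (G : Multigraph) : G.V → G.V → Type
  | nil (v : G.V) : Walk G v v
  | cons {u v w : G.V} (e : G.E) (h : G.ends e = s(u, v)) (p : Walk G v w) : Walk G u w

/-- The list of edges traversed by a walk. -/
def Walk.edges {G : Multigraph} : {u v : G.V} → G.Walk u v → List G.E
  | _, _, .nil _ => []
  | _, _, .cons e _ p => e :: p.edges

/-- The list of vertices visited by a walk. -/
def Walk.support {G : Multigraph} : {u v : G.V} → G.Walk u v → List G.V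
  | u, _, .nil _ => [u]
  | u, _, .cons _ _ p => u :: p.support

/-- A walk is a path if it visits no vertex twice. -/
def Walk.IsPath {G : Multigraph} {u v : G.V} (p : G.Walk u v) : Prop := p.support.Nodup

/-- Data of an immersion of `H` into `G`: an injective map on vertices and,
for each edge of `H`, a path in `G` joining the images of its endpoints,
the paths being pairwise edge-disjoint. -/
structure ImmersionData (H G : Multigraph) where
  vmap : H.V → G.V
  inj : Function.Injective vmap
  pstart : H.E → G.V
  pend : H.E → G.V
  walk : ∀ e, G.Walk (pstart e) (pend e)
  ends_eq : ∀ e, s(pstart e, pend e) = (H.ends e).map vmap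
  isPath : ∀ e, (walk e).IsPath
  edgeDisj : ∀ e e', e ≠ e' → List.Disjoint (walk e).edges (walk e').edges

/-- `H` immerses in `G`. -/
def Immerses (H G : Multigraph) : Prop := Nonempty (ImmersionData H G)

/-- Data witnessing that `G` contains a subdivision of `H` as a subgraph
(i.e. `H` is a topological minor of `G`): as an immersion, but moreover the
paths may only meet at images of common endpoints. -/
structure SubdivisionData (H G : Multigraph) extends ImmersionData H G where
  vtxDisj : ∀ e e', e ≠ e' → ∀ x, x ∈ (walk e).support → x ∈ (walk e').support →
    ∃ w, x = vmap w ∧ w ∈ H.ends e ∧ w ∈ H.ends e'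

/-- `G` contains a subdivision of `H` as a subgraph. -/
def ContainsSubdivision (H G : Multigraph) : Prop := Nonempty (SubdivisionData H G)

/-- The complete bipartite graph `K_{3,3}`. -/
def K33 : Multigraph where
  V := Fin 3 ⊕ Fin 3
  E := Fin 3 × Fin 3
  ends e := s(Sum.inl e.1, Sum.inr e.2)
  noLoop e := by simp [Sym2.mk_isDiag_iff]

/-- The complete graph `K_5`. -/
def K5 : Multigraph where
  V := Fin 5
  E := {p : Fin 5 × Fin 5 // p.1 < p.2}
  ends e := s(e.1.1, e.1.2)
  noLoop e := by simpa [Sym2.mk_isDiag_iff] using e.2.ne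

variable (G : Multigraph)

/-- The degree of a vertex: the number of incident edges. -/
def deg (v : G.V) : ℕ := (Finset.univ.filter fun e => v ∈ G.ends e).card

/-- The multiplicity of the (possible) edge between `u` and `v`. -/
def mult (u v : G.V) : ℕ := (Finset.univ.filter fun e => G.ends e = s(u, v)).card

/-- The edge cut determined by a set `A` of vertices. -/
def cut (A : Finset G.V) : Finset G.E :=
  Finset.univ.filter fun e => ∃ u ∈ A, ∃ v ∈ Aᶜ, G.ends e = s(u, v)

/-- Every edge cut of `G` has at least `k` edges. -/
def EdgeConnGe (k : ℕ) : Prop :=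
  ∀ A : Finset G.V, A.Nonempty → A ≠ Finset.univ → k ≤ (G.cut A).card

/-- Internally 4-edge-connected: 3-edge-connected and every 3-edge cut has a
side consisting of a single vertex. -/
def Internally4EC : Prop :=
  G.EdgeConnGe 3 ∧ ∀ A : Finset G.V, A.Nonempty → A ≠ Finset.univ →
    (G.cut A).card = 3 → A.card = 1 ∨ Aᶜ.card = 1

/-- Weakly 5-edge-connected: internally 4-edge-connected and every 4-edge cut
has a side with at most two vertices. -/
def Weakly5EC : Prop :=
  G.Internally4EC ∧ ∀ A : Finset G.V, A.Nonempty → A ≠ Finset.univ →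
    (G.cut A).card = 4 → A.card ≤ 2 ∨ Aᶜ.card ≤ 2

/-- `G` is `d`-regular. -/
def IsRegular (d : ℕ) : Prop := ∀ v, G.deg v = d

/-- `G` is connected. -/
def Connected : Prop := ∀ u v : G.V, Nonempty (G.Walk u v)

/-- `v` is a cut-vertex: the remaining vertices split into two nonempty parts
with no edge between them. -/
def IsCutVertex (v : G.V) : Prop :=
  ∃ C D : Finset G.V, C.Nonempty ∧ D.Nonempty ∧ Disjoint C D ∧ v ∉ C ∧ v ∉ D ∧
    (∀ x : G.V, x ∈ C ∪ D ∨ x = v) ∧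
    ∀ e : G.E, ¬ ∃ u ∈ C, ∃ w ∈ D, G.ends e = s(u, w)

/-- `G` is 2-connected. -/
def TwoConnected : Prop :=
  G.Connected ∧ 3 ≤ Fintype.card G.V ∧ ∀ v, ¬ G.IsCutVertex v

/-- Planarity, via Kuratowski's characterization: no subdivision of `K_5`
nor of `K_{3,3}` as a subgraph. -/
def Planar : Prop := ¬ ContainsSubdivision K5 G ∧ ¬ ContainsSubdivision K33 G

end Multigraph


namespace Multigraph

section Aux

variable {G : Multigraph}

/-! ### Basic lemmas about cuts -/

lemma mem_cut {A : Finset G.V} {e : G.E} :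
    e ∈ G.cut A ↔ ∃ a ∈ A, ∃ b ∈ Aᶜ, G.ends e = s(a, b) := by
  simp [cut]

lemma mem_cut_of_ends {A : Finset G.V} {e : G.E} {a b : G.V}
    (h : G.ends e = s(a, b)) (ha : a ∈ A) (hb : b ∉ A) : e ∈ G.cut A :=
  mem_cut.2 ⟨a, ha, b, Finset.mem_compl.2 hb, h⟩

lemma mem_cut_of_ends' {A : Finset G.V} {e : G.E} {a b : G.V}
    (h : G.ends e = s(a, b)) (ha : a ∉ A) (hb : b ∈ A) : e ∈ G.cut A :=
  mem_cut_of_ends (h.trans (Sym2.eq_swap)) hb ha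

lemma cut_cases {A : Finset G.V} {e : G.E} {a b : G.V} (h : G.ends e = s(a, b))
    (he : e ∈ G.cut A) : (a ∈ A ∧ b ∉ A) ∨ (b ∈ A ∧ a ∉ A) := by
  obtain ⟨c, hc, d, hd, hcd⟩ := mem_cut.1 he
  rw [Finset.mem_compl] at hd
  rw [h] at hcd
  rcases Sym2.eq_iff.1 hcd with ⟨rfl, rfl⟩ | ⟨rfl, rfl⟩
  · exact Or.inl ⟨hc, hd⟩
  · exact Or.inr ⟨hc, hd⟩

lemma not_mem_cut_of_ends {A : Finset G.V} {e : G.E} {a b : G.V}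
    (h : G.ends e = s(a, b)) (ha : a ∈ A) (hb : b ∈ A) : e ∉ G.cut A := by
  intro he
  rcases cut_cases h he with ⟨_, h2⟩ | ⟨_, h2⟩ <;> exact h2 (by assumption)

lemma not_mem_cut_of_ends_out {A : Finset G.V} {e : G.E} {a b : G.V}
    (h : G.ends e = s(a, b)) (ha : a ∉ A) (hb : b ∉ A) : e ∉ G.cut A := by
  intro he
  rcases cut_cases h he with ⟨h1, _⟩ | ⟨h1, _⟩ <;> exact (by assumption : _ ∉ A) h1

lemma cut_compl (A : Finset G.V) : G.cut Aᶜ = G.cut A := by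
  ext e
  simp only [mem_cut, Finset.mem_compl, compl_compl]
  constructor
  · rintro ⟨a, ha, b, hb, h⟩
    exact ⟨b, by simpa using hb, a, by simpa using ha, h.trans Sym2.eq_swap⟩
  · rintro ⟨a, ha, b, hb, h⟩
    exact ⟨b, by simpa using hb, a, by simpa using ha, h.trans Sym2.eq_swap⟩

lemma exists_ends (e : G.E) : ∃ a b : G.V, G.ends e = s(a, b) := by
  induction (G.ends e) using Sym2.ind with
  | _ x y => exact ⟨x, y, rfl⟩

lemma ne_univ_of_not_mem {A : Finset G.V} {z : G.V} (hz : z ∉ A) : A ≠ Finset.univ := by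
  intro h; exact hz (h ▸ Finset.mem_univ z)

lemma mult_self (u : G.V) : G.mult u u = 0 := by
  rw [mult, Finset.card_eq_zero, Finset.filter_eq_empty_iff]
  intro e _ h
  exact G.noLoop e (by rw [h]; simp [Sym2.mk_isDiag_iff])

/-! ### Walk lemmas -/

lemma Walk.exists_suffix {a c b : G.V} (p : G.Walk c b) (ha : a ∈ p.support) :
    ∃ q : G.Walk a b, (∀ e ∈ q.edges, e ∈ p.edges) ∧ q.support.Sublist p.support := by
  induction p with
  | nil w =>
    simp only [Walk.support, List.mem_singleton] at ha
    subst ha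
    exact ⟨.nil _, by simp [Walk.edges], by simp [Walk.support]⟩
  | cons e h p ih =>
    simp only [Walk.support, List.mem_cons] at ha
    rcases ha with rfl | ha
    · exact ⟨.cons e h p, fun _ he => he, List.Sublist.refl _⟩
    · obtain ⟨q, hq, hsl⟩ := ih ha
      exact ⟨q, fun e' he' => by simp [Walk.edges]; right; exact hq e' he',
        hsl.trans (List.sublist_cons_self _ _)⟩

lemma Walk.exists_path {a b : G.V} (w : G.Walk a b) :
    ∃ p : G.Walk a b, p.IsPath ∧ ∀ e ∈ p.edges, e ∈ w.edges := by
  induction w with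
  | nil v => exact ⟨.nil v, by simp [Walk.IsPath, Walk.support], by simp⟩
  | @cons u' v' w' e h w ih =>
    obtain ⟨p, hp, hsub⟩ := ih
    by_cases hmem : u' ∈ p.support
    · obtain ⟨q, hq, hsl⟩ := p.exists_suffix hmem
      exact ⟨q, hsl.nodup hp, fun e' he' => by
        simp only [Walk.edges, List.mem_cons]; right; exact hsub e' (hq e' he')⟩
    · refine ⟨.cons e h p, ?_, fun e' he' => ?_⟩
      · simpa [Walk.IsPath, Walk.support, hmem] using hp
      · simp only [Walk.edges, List.mem_cons] at he' ⊢
        rcases he' with rfl | he'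
        · exact Or.inl rfl
        · exact Or.inr (hsub e' he')

end Aux

section Surgery

variable {G : Multigraph}

lemma cross_iff {A : Finset G.V} {e : G.E} {a b : G.V} (h : G.ends e = s(a, b)) :
    e ∈ G.cut A ↔ (a ∈ A ∧ b ∉ A) ∨ (b ∈ A ∧ a ∉ A) :=
  ⟨cut_cases h, fun h' => h'.elim (fun ⟨h1, h2⟩ => mem_cut_of_ends h h1 h2)
    (fun ⟨h1, h2⟩ => mem_cut_of_ends' h h2 h1)⟩

lemma card_filter_subtype {α : Type} [Fintype α] [DecidableEq α] (e₀ : α)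
    (p : α → Prop) [DecidablePred p] :
    (Finset.univ.filter (fun e : {e : α // e ≠ e₀} => p e.val)).card
      = ((Finset.univ.filter p).erase e₀).card := by
  apply Finset.card_bij (fun e _ => e.val)
  · intro a ha
    simp only [Finset.mem_filter, Finset.mem_univ, true_and] at ha
    simp only [Finset.mem_erase, Finset.mem_filter, Finset.mem_univ, true_and]
    exact ⟨a.prop, ha⟩
  · intro a _ b _ h
    exact Subtype.ext h
  · intro b hb
    simp only [Finset.mem_erase, Finset.mem_filter, Finset.mem_univ, true_and] at hb
    exact ⟨⟨b, hb.1⟩, by simp [hb.2], rfl⟩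

/-! ### Deleting an edge -/

@[reducible] def delEdge (G : Multigraph) (e₀ : G.E) : Multigraph where
  V := G.V
  E := {e : G.E // e ≠ e₀}
  ends e := G.ends e.val
  noLoop e := G.noLoop e.val

lemma delEdge_cut (e₀ : G.E) (A : Finset G.V) :
    ((delEdge G e₀).cut A).card = ((G.cut A).erase e₀).card := by
  have h1 : (delEdge G e₀).cut A
      = Finset.univ.filter (fun e : {e : G.E // e ≠ e₀} => (fun e' => e' ∈ G.cut A) e.val) := by
    ext e
    simp only [cut, Finset.mem_filter, Finset.mem_univ, true_and, delEdge]
  rw [h1, card_filter_subtype e₀ (fun e => e ∈ G.cut A)]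
  congr 1
  ext e
  simp [cut]

lemma delEdge_deg (e₀ : G.E) (z : G.V) :
    ((delEdge G e₀).deg z) = ((Finset.univ.filter fun e => z ∈ G.ends e).erase e₀).card := by
  have h1 : (Finset.univ.filter fun e : (delEdge G e₀).E => z ∈ (delEdge G e₀).ends e)
      = Finset.univ.filter (fun e : {e : G.E // e ≠ e₀} => (fun e' => z ∈ G.ends e') e.val) := by
    ext e
    simp only [Finset.mem_filter, Finset.mem_univ, true_and, delEdge]
  show (Finset.univ.filter fun e : (delEdge G e₀).E => z ∈ (delEdge G e₀).ends e).card = _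
  rw [h1, card_filter_subtype e₀ (fun e' => z ∈ G.ends e')]

lemma delEdge_card_E (e₀ : G.E) :
    Fintype.card (delEdge G e₀).E + 1 = Fintype.card G.E := by
  have h2 : Fintype.card {e : G.E // e ≠ e₀} = Fintype.card G.E - 1 := by
    rw [Fintype.card_subtype]
    have : Finset.univ.filter (fun e : G.E => e ≠ e₀) = Finset.univ.erase e₀ := by
      ext e; simp [Finset.mem_erase]
    rw [this, Finset.card_erase_of_mem (Finset.mem_univ _), Finset.card_univ]
  show Fintype.card {e : G.E // e ≠ e₀} + 1 = _
  rw [h2]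
  have hpos : 0 < Fintype.card G.E := Fintype.card_pos_iff.2 ⟨e₀⟩
  omega

lemma delEdge_walk_lift (e₀ : G.E) {a b : (delEdge G e₀).V}
    (p : (delEdge G e₀).Walk a b) :
    ∃ w : G.Walk a b, w.support = @Walk.support (delEdge G e₀) a b p ∧
      ∀ e ∈ w.edges, ∃ h : e ≠ e₀,
        (⟨e, h⟩ : {e : G.E // e ≠ e₀}) ∈ @Walk.edges (delEdge G e₀) a b p := by
  induction p with
  | nil w => exact ⟨@Walk.nil G w, rfl, by simp [Walk.edges]⟩
  | @cons a c b e he p ih =>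
    obtain ⟨w, hsupp, hspec⟩ := ih
    refine ⟨.cons e.val he w, ?_, ?_⟩
    · show (_ :: w.support : List G.V) = _ :: _
      rw [hsupp]
    · intro e' he'
      simp only [Walk.edges, List.mem_cons] at he' ⊢
      rcases he' with rfl | he'
      · exact ⟨e.prop, Or.inl (Subtype.ext rfl)⟩
      · obtain ⟨h, hh⟩ := hspec e' he'
        exact ⟨h, Or.inr hh⟩

lemma not_immerses_delEdge (H : Multigraph) (e₀ : G.E) (hno : ¬ Immerses H G) :
    ¬ Immerses H (delEdge G e₀) := by
  rintro ⟨D⟩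
  refine hno ⟨?_⟩
  choose w hsupp hspec using fun k : H.E => delEdge_walk_lift e₀ (D.walk k)
  exact {
    vmap := D.vmap
    inj := D.inj
    pstart := D.pstart
    pend := D.pend
    walk := w
    ends_eq := D.ends_eq
    isPath := fun k => by
      have h2 := D.isPath k
      unfold Walk.IsPath at h2 ⊢
      rw [hsupp k]; exact h2
    edgeDisj := fun k k' hkk' => by
      intro e hek hek'
      obtain ⟨h1, hh1⟩ := hspec k e hek
      obtain ⟨h2, hh2⟩ := hspec k' e hek'
      exact D.edgeDisj k k' hkk' hh1 hh2 }

/-! ### Splitting off -/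

@[reducible] def splitOff (G : Multigraph) (e₀ e₁ : G.E) (x v : G.V) (hxv : x ≠ v) :
    Multigraph where
  V := G.V
  E := {e : G.E // e ≠ e₁}
  ends e := if e.val = e₀ then s(x, v) else G.ends e.val
  noLoop e := by
    split
    · simp only [Sym2.mk_isDiag_iff]; exact hxv
    · exact G.noLoop e.val

variable {e₀ e₁ : G.E} {x v : G.V} {hxv : x ≠ v}

lemma splitOff_ends (e : (splitOff G e₀ e₁ x v hxv).E) :
    (splitOff G e₀ e₁ x v hxv).ends e = if e.val = e₀ then s(x, v) else G.ends e.val := rfl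

lemma splitOff_mem_cut {A : Finset G.V} (e : (splitOff G e₀ e₁ x v hxv).E) :
    e ∈ (splitOff G e₀ e₁ x v hxv).cut A ↔
      (if e.val = e₀ then (x ∈ A ∧ v ∉ A) ∨ (v ∈ A ∧ x ∉ A) else e.val ∈ G.cut A) := by
  by_cases h : e.val = e₀
  · rw [if_pos h]
    exact cross_iff (by rw [splitOff_ends, if_pos h])
  · rw [if_neg h]
    obtain ⟨a, b, hab⟩ := exists_ends (G := G) e.val
    rw [cross_iff (show (splitOff G e₀ e₁ x v hxv).ends e = s(a, b) by
      rw [splitOff_ends, if_neg h]; exact hab)]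
    exact (cross_iff hab).symm

lemma splitOff_cut (h01 : e₀ ≠ e₁) (A : Finset G.V) :
    ((splitOff G e₀ e₁ x v hxv).cut A).card
      = (((G.cut A).erase e₀).erase e₁).card
        + (if (x ∈ A ∧ v ∉ A) ∨ (v ∈ A ∧ x ∉ A) then 1 else 0) := by
  classical
  have hcard : ((((G.cut A).erase e₀).erase e₁)
      ∪ (if (x ∈ A ∧ v ∉ A) ∨ (v ∈ A ∧ x ∉ A) then {e₀} else ∅)).card
      = (((G.cut A).erase e₀).erase e₁).card
        + (if (x ∈ A ∧ v ∉ A) ∨ (v ∈ A ∧ x ∉ A) then 1 else 0) := by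
    rw [Finset.card_union_of_disjoint]
    · congr 1
      split <;> simp
    · split
      · simp only [Finset.disjoint_singleton_right, Finset.mem_erase]
        intro h; exact h.2.1 rfl
      · simp
  rw [← hcard]
  apply Finset.card_bij (fun e _ => e.val)
  · intro e he
    rw [splitOff_mem_cut] at he
    by_cases h : e.val = e₀
    · rw [if_pos h] at he
      apply Finset.mem_union_right
      rw [if_pos he, h]
      simp
    · rw [if_neg h] at he
      apply Finset.mem_union_left
      simp only [Finset.mem_erase]
      exact ⟨e.prop, h, he⟩
  · intro a _ b _ h
    exact Subtype.ext h
  · intro b hb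
    rcases Finset.mem_union.1 hb with hb | hb
    · simp only [Finset.mem_erase] at hb
      obtain ⟨hb1, hb0, hbcut⟩ := hb
      refine ⟨⟨b, hb1⟩, ?_, rfl⟩
      rw [splitOff_mem_cut, if_neg hb0]
      exact hbcut
    · by_cases hc : (x ∈ A ∧ v ∉ A) ∨ (v ∈ A ∧ x ∉ A)
      · rw [if_pos hc] at hb
        simp only [Finset.mem_singleton] at hb
        refine ⟨⟨e₀, h01⟩, ?_, hb.symm⟩
        rw [splitOff_mem_cut, if_pos rfl]
        exact hc
      · rw [if_neg hc] at hb
        simp at hb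

lemma splitOff_card_E (h01 : e₀ ≠ e₁) :
    Fintype.card (splitOff G e₀ e₁ x v hxv).E + 1 = Fintype.card G.E := by
  have h2 : Fintype.card {e : G.E // e ≠ e₁} = Fintype.card G.E - 1 := by
    rw [Fintype.card_subtype]
    have : Finset.univ.filter (fun e : G.E => e ≠ e₁) = Finset.univ.erase e₁ := by
      ext e; simp [Finset.mem_erase]
    rw [this, Finset.card_erase_of_mem (Finset.mem_univ _), Finset.card_univ]
  show Fintype.card {e : G.E // e ≠ e₁} + 1 = _
  rw [h2]
  have hpos : 0 < Fintype.card G.E := Fintype.card_pos_iff.2 ⟨e₁⟩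
  omega

lemma splitOff_deg_u {u : G.V} (h₀ : G.ends e₀ = s(u, v)) (h₁ : G.ends e₁ = s(x, u))
    (h01 : e₀ ≠ e₁) (hux : u ≠ x) (huv : u ≠ v) :
    ((splitOff G e₀ e₁ x v hxv).deg u) + 2 = G.deg u := by
  have key : (splitOff G e₀ e₁ x v hxv).deg u
      = (((Finset.univ.filter fun e => u ∈ G.ends e).erase e₀).erase e₁).card := by
    have h1 : (Finset.univ.filter fun e : (splitOff G e₀ e₁ x v hxv).E =>
          u ∈ (splitOff G e₀ e₁ x v hxv).ends e)
        = Finset.univ.filter (fun e : {e : G.E // e ≠ e₁} =>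
          (fun e' => e' ≠ e₀ ∧ u ∈ G.ends e') e.val) := by
      ext e
      simp only [Finset.mem_filter, Finset.mem_univ, true_and]
      by_cases h : e.val = e₀
      · rw [if_pos h]
        simp only [Sym2.mem_iff]
        constructor
        · rintro (rfl | rfl)
          · exact absurd rfl hux
          · exact absurd rfl huv
        · rintro ⟨h', _⟩; exact absurd h h'
      · rw [if_neg h]
        tauto
    show (Finset.univ.filter fun e : (splitOff G e₀ e₁ x v hxv).E =>
        u ∈ (splitOff G e₀ e₁ x v hxv).ends e).card = _
    rw [h1, card_filter_subtype e₁ (fun e' => e' ≠ e₀ ∧ u ∈ G.ends e')]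
    congr 1
    ext e
    simp only [Finset.mem_erase, Finset.mem_filter, Finset.mem_univ, true_and]
  rw [key]
  have he₀ : e₀ ∈ Finset.univ.filter fun e => u ∈ G.ends e := by
    simp [h₀]
  have he₁ : e₁ ∈ (Finset.univ.filter fun e => u ∈ G.ends e).erase e₀ := by
    simp only [Finset.mem_erase]
    exact ⟨h01.symm, by simp [h₁]⟩
  have k1 := Finset.card_erase_add_one he₁
  have k2 := Finset.card_erase_add_one he₀
  have k3 : G.deg u = (Finset.univ.filter fun e => u ∈ G.ends e).card := rfl
  omega

lemma splitOff_walk_expand {u : G.V} (h₀ : G.ends e₀ = s(u, v)) (h₁ : G.ends e₁ = s(x, u))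
    (h01 : e₀ ≠ e₁) {a b : (splitOff G e₀ e₁ x v hxv).V}
    (p : (splitOff G e₀ e₁ x v hxv).Walk a b) :
    ∃ w : G.Walk a b, ∀ e ∈ w.edges,
      ((e = e₀ ∨ e = e₁) ∧ (⟨e₀, h01⟩ : {e : G.E // e ≠ e₁}) ∈
          @Walk.edges (splitOff G e₀ e₁ x v hxv) a b p) ∨
      (∃ h : e ≠ e₁, e ≠ e₀ ∧ (⟨e, h⟩ : {e : G.E // e ≠ e₁}) ∈
          @Walk.edges (splitOff G e₀ e₁ x v hxv) a b p) := by
  induction p with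
  | nil w => exact ⟨@Walk.nil G w, by simp [Walk.edges]⟩
  | @cons a c b e he p ih =>
    obtain ⟨w, hw⟩ := ih
    by_cases h : e.val = e₀
    · have hxv' : s(x, v) = s(a, c) := by
        rw [← he, splitOff_ends, if_pos h]
      have hee : e = ⟨e₀, h01⟩ := Subtype.ext h
      rcases Sym2.eq_iff.1 hxv' with ⟨h2, h3⟩ | ⟨h2, h3⟩
      · subst h2; subst h3
        refine ⟨.cons e₁ (by rw [h₁]) (.cons e₀ (by rw [h₀]) w), ?_⟩
        intro e' he'
        simp only [Walk.edges, List.mem_cons] at he' ⊢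
        rcases he' with rfl | rfl | he'
        · exact Or.inl ⟨Or.inr rfl, Or.inl hee.symm⟩
        · exact Or.inl ⟨Or.inl rfl, Or.inl hee.symm⟩
        · rcases hw e' he' with ⟨hl, hr⟩ | ⟨hh, hne, hmem⟩
          · exact Or.inl ⟨hl, Or.inr hr⟩
          · exact Or.inr ⟨hh, hne, Or.inr hmem⟩
      · subst h2; subst h3
        refine ⟨.cons e₀ (by rw [h₀]; exact Sym2.eq_swap)
          (.cons e₁ (by rw [h₁]; exact Sym2.eq_swap) w), ?_⟩
        intro e' he'
        simp only [Walk.edges, List.mem_cons] at he' ⊢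
        rcases he' with rfl | rfl | he'
        · exact Or.inl ⟨Or.inl rfl, Or.inl hee.symm⟩
        · exact Or.inl ⟨Or.inr rfl, Or.inl hee.symm⟩
        · rcases hw e' he' with ⟨hl, hr⟩ | ⟨hh, hne, hmem⟩
          · exact Or.inl ⟨hl, Or.inr hr⟩
          · exact Or.inr ⟨hh, hne, Or.inr hmem⟩
    · have hends : G.ends e.val = s(a, c) := by
        rw [← he, splitOff_ends, if_neg h]
      refine ⟨.cons e.val hends w, ?_⟩
      intro e' he'
      simp only [Walk.edges, List.mem_cons] at he' ⊢
      rcases he' with rfl | he'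
      · exact Or.inr ⟨e.prop, h, Or.inl (Subtype.ext rfl)⟩
      · rcases hw e' he' with ⟨hl, hr⟩ | ⟨hh, hne, hmem⟩
        · exact Or.inl ⟨hl, Or.inr hr⟩
        · exact Or.inr ⟨hh, hne, Or.inr hmem⟩

lemma not_immerses_splitOff (H : Multigraph) {u : G.V}
    (h₀ : G.ends e₀ = s(u, v)) (h₁ : G.ends e₁ = s(x, u)) (h01 : e₀ ≠ e₁)
    (hno : ¬ Immerses H G) : ¬ Immerses H (splitOff G e₀ e₁ x v hxv) := by
  rintro ⟨D⟩
  refine hno ⟨?_⟩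
  have key : ∀ k : H.E, ∃ w : G.Walk (D.pstart k) (D.pend k), w.IsPath ∧
      ∀ e ∈ w.edges,
        ((e = e₀ ∨ e = e₁) ∧ (⟨e₀, h01⟩ : {e : G.E // e ≠ e₁}) ∈ (D.walk k).edges) ∨
        (∃ h : e ≠ e₁, e ≠ e₀ ∧ (⟨e, h⟩ : {e : G.E // e ≠ e₁}) ∈ (D.walk k).edges) := by
    intro k
    obtain ⟨w, hw⟩ := splitOff_walk_expand h₀ h₁ h01 (D.walk k)
    obtain ⟨p, hp, hsub⟩ := w.exists_path
    exact ⟨p, hp, fun e he => hw e (hsub e he)⟩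
  choose w hpath hspec using key
  exact {
    vmap := D.vmap
    inj := D.inj
    pstart := D.pstart
    pend := D.pend
    walk := w
    ends_eq := D.ends_eq
    isPath := hpath
    edgeDisj := fun k k' hkk' => by
      intro e hek hek'
      rcases hspec k e hek with ⟨he01, hmem⟩ | ⟨hne1, hne0, hmem⟩ <;>
        rcases hspec k' e hek' with ⟨he01', hmem'⟩ | ⟨hne1', hne0', hmem'⟩
      · exact D.edgeDisj k k' hkk' hmem hmem'
      · rcases he01 with rfl | rfl
        · exact hne0' rfl
        · exact hne1' rfl
      · rcases he01' with rfl | rfl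
        · exact hne0 rfl
        · exact hne1 rfl
      · exact D.edgeDisj k k' hkk' hmem hmem' }

end Surgery

section MainAux

variable {G : Multigraph}

/-- The set of parallel edges between `u` and `v`. -/
def Par (G : Multigraph) (u v : G.V) : Finset G.E :=
  Finset.univ.filter fun e => G.ends e = s(u, v)

lemma Par_card (u v : G.V) : (Par G u v).card = G.mult u v := rfl

lemma mem_Par {u v : G.V} {e : G.E} : e ∈ Par G u v ↔ G.ends e = s(u, v) := by
  simp [Par]

lemma Par_subset_cut {A : Finset G.V} {u v : G.V} (hu : u ∈ A) (hv : v ∉ A) :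
    Par G u v ⊆ G.cut A :=
  fun _ he => mem_cut_of_ends (mem_Par.1 he) hu hv

/-- The bad-cut configuration that obstructs plain edge deletion. -/
def Bad (G : Multigraph) (u v : G.V) : Prop :=
  ∃ A : Finset G.V, u ∈ A ∧ v ∉ A ∧
    (((G.cut A).card = 4 ∧ 2 ≤ A.card ∧ 2 ≤ Aᶜ.card) ∨
     ((G.cut A).card = 5 ∧ 3 ≤ A.card ∧ 3 ≤ Aᶜ.card))

lemma pair_card {u v : G.V} (huv : u ≠ v) : ({u, v} : Finset G.V).card = 2 := by
  rw [Finset.card_insert_of_notMem (by simp [huv]), Finset.card_singleton]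

lemma pair_ne_univ {u v : G.V} (hn : 6 ≤ Fintype.card G.V) :
    ({u, v} : Finset G.V) ≠ Finset.univ := by
  intro h
  have h1 : ({u, v} : Finset G.V).card ≤ 2 :=
    (Finset.card_insert_le _ _).trans (by simp)
  rw [h, Finset.card_univ] at h1
  omega

/-- If deleting a parallel edge fails, a bad cut exists. -/
lemma w5_delEdge (h5 : G.Weakly5EC) {u v : G.V} (hm : 4 ≤ G.mult u v)
    {e₀ : G.E} (he₀ : G.ends e₀ = s(u, v)) (hnb : ¬ Bad G u v) :
    (delEdge G e₀).Weakly5EC := by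
  have key : ∀ A : Finset G.V, A.Nonempty → A ≠ Finset.univ →
      (3 ≤ ((delEdge G e₀).cut A).card) ∧
      (((delEdge G e₀).cut A).card = 3 → A.card = 1 ∨ Aᶜ.card = 1) ∧
      (((delEdge G e₀).cut A).card = 4 → A.card ≤ 2 ∨ Aᶜ.card ≤ 2) := by
    intro A hA hAu
    have hcut := delEdge_cut e₀ A
    by_cases hmem : e₀ ∈ G.cut A
    · have hc : ((delEdge G e₀).cut A).card + 1 = (G.cut A).card := by
        rw [hcut, Finset.card_erase_add_one hmem]
      have hP : Par G u v ⊆ G.cut A := by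
        rcases cut_cases he₀ hmem with ⟨h1, h2⟩ | ⟨h1, h2⟩
        · exact Par_subset_cut h1 h2
        · intro e he
          exact mem_cut_of_ends' (mem_Par.1 he) h2 h1
      have hM : 4 ≤ (G.cut A).card := le_trans (by rw [Par_card]; exact hm)
        (Finset.card_le_card hP)
      refine ⟨by omega, ?_, ?_⟩
      · intro h3
        have h4 : (G.cut A).card = 4 := by omega
        by_contra hcon
        push_neg at hcon
        obtain ⟨hA1, hA2⟩ := hcon
        have hApos : 1 ≤ A.card := Finset.card_pos.2 hA
        have hAcpos : 1 ≤ Aᶜ.card := by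
          rcases cut_cases he₀ hmem with ⟨_, h2⟩ | ⟨_, h2⟩
          · exact Finset.card_pos.2 ⟨v, Finset.mem_compl.2 h2⟩
          · exact Finset.card_pos.2 ⟨u, Finset.mem_compl.2 h2⟩
        rcases cut_cases he₀ hmem with ⟨h1, h2⟩ | ⟨h1, h2⟩
        · exact hnb ⟨A, h1, h2, Or.inl ⟨h4, by omega, by omega⟩⟩
        · refine hnb ⟨Aᶜ, Finset.mem_compl.2 h2, by simp [h1], Or.inl ⟨?_, by omega, ?_⟩⟩
          · rw [cut_compl]; exact h4
          · rw [compl_compl]; omega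
      · intro h3
        have h4 : (G.cut A).card = 5 := by omega
        by_contra hcon
        push_neg at hcon
        obtain ⟨hA1, hA2⟩ := hcon
        rcases cut_cases he₀ hmem with ⟨h1, h2⟩ | ⟨h1, h2⟩
        · exact hnb ⟨A, h1, h2, Or.inr ⟨h4, by omega, by omega⟩⟩
        · refine hnb ⟨Aᶜ, Finset.mem_compl.2 h2, by simp [h1], Or.inr ⟨?_, by omega, ?_⟩⟩
          · rw [cut_compl]; exact h4
          · rw [compl_compl]; omega
    · have hc : ((delEdge G e₀).cut A).card = (G.cut A).card := by
        rw [hcut, Finset.erase_eq_of_notMem hmem]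
      rw [hc]
      exact ⟨h5.1.1 A hA hAu, h5.1.2 A hA hAu, h5.2 A hA hAu⟩
  exact ⟨⟨fun A hA hAu => (key A hA hAu).1, fun A hA hAu => (key A hA hAu).2.1⟩,
    fun A hA hAu => (key A hA hAu).2.2⟩

lemma delEdge_not_regular (h5 : G.Weakly5EC) (hn : 6 ≤ Fintype.card G.V)
    {u v : G.V} (huv : u ≠ v) (hm : 4 ≤ G.mult u v)
    {e₀ : G.E} (he₀ : G.ends e₀ = s(u, v)) :
    ¬ (delEdge G e₀).IsRegular 3 := by
  intro hreg
  have hu_at : Par G u v ⊆ Finset.univ.filter (fun e => u ∈ G.ends e) := by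
    intro e he
    simp only [Finset.mem_filter, Finset.mem_univ, true_and, mem_Par.1 he, Sym2.mem_iff]
    simp
  have hv_at : Par G u v ⊆ Finset.univ.filter (fun e => v ∈ G.ends e) := by
    intro e he
    simp only [Finset.mem_filter, Finset.mem_univ, true_and, mem_Par.1 he, Sym2.mem_iff]
    simp
  have hmemu : e₀ ∈ Finset.univ.filter (fun e => u ∈ G.ends e) := by
    simp only [Finset.mem_filter, Finset.mem_univ, true_and, he₀, Sym2.mem_iff]
    simp
  have hmemv : e₀ ∈ Finset.univ.filter (fun e => v ∈ G.ends e) := by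
    simp only [Finset.mem_filter, Finset.mem_univ, true_and, he₀, Sym2.mem_iff]
    simp
  have h4u : (Finset.univ.filter (fun e => u ∈ G.ends e)).card = 4 := by
    have h1 := hreg u
    rw [delEdge_deg] at h1
    have h2 := Finset.card_erase_add_one hmemu
    omega
  have h4v : (Finset.univ.filter (fun e => v ∈ G.ends e)).card = 4 := by
    have h1 := hreg v
    rw [delEdge_deg] at h1
    have h2 := Finset.card_erase_add_one hmemv
    omega
  have hPcard : (Par G u v).card = 4 := by
    have := Finset.card_le_card hu_at
    have := Par_card (G := G) u v
    omega
  have hPu : Par G u v = Finset.univ.filter (fun e => u ∈ G.ends e) :=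
    Finset.eq_of_subset_of_card_le hu_at (by omega)
  have hPv : Par G u v = Finset.univ.filter (fun e => v ∈ G.ends e) :=
    Finset.eq_of_subset_of_card_le hv_at (by omega)
  have hcut0 : G.cut {u, v} = ∅ := by
    rw [Finset.eq_empty_iff_forall_notMem]
    intro e he
    obtain ⟨a, ha, b, hb, hab⟩ := mem_cut.1 he
    rw [Finset.mem_compl] at hb
    have haP : e ∈ Par G u v := by
      rcases Finset.mem_insert.1 ha with rfl | ha'
      · rw [hPu]
        simp only [Finset.mem_filter, Finset.mem_univ, true_and, hab, Sym2.mem_iff]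
        simp
      · rw [Finset.mem_singleton] at ha'
        subst ha'
        rw [hPv]
        simp only [Finset.mem_filter, Finset.mem_univ, true_and, hab, Sym2.mem_iff]
        simp
    have hends : G.ends e = s(u, v) := mem_Par.1 haP
    rw [hends] at hab
    rcases Sym2.eq_iff.1 hab with ⟨h1, h2⟩ | ⟨h1, h2⟩
    · exact hb (by rw [← h2]; simp)
    · exact hb (by rw [← h1]; simp)
  have h3 := h5.1.1 {u, v} ⟨u, by simp⟩ (pair_ne_univ hn)
  rw [hcut0] at h3
  simp at h3

/-- Core counting bound for the split-off surgery. -/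
lemma core (h5 : G.Weakly5EC) {u v : G.V} (huv : u ≠ v) (hm4 : 4 ≤ G.mult u v)
    {A : Finset G.V} (huA : u ∈ A) (hvA : v ∉ A)
    {x : G.V} (hxS : x ∈ A.erase u)
    (hcut5 : (G.cut A).card ≤ 5)
    {A' : Finset G.V} (huA' : u ∈ A') (hxA' : x ∉ A') (hvA' : v ∉ A') :
    6 ≤ (G.cut A').card ∧
    ((G.cut A').card = 6 →
      ∃ f, (G.cut A) \ Par G u v = {f} ∧ f ∈ G.cut (A.erase u \ A') ∧
        (G.cut (A.erase u \ A')).card = 3 ∧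
        G.cut A' = Par G u v ∪ (G.cut (A.erase u \ A') \ {f})) := by
  classical
  set S := A.erase u with hSdef
  set X := (G.cut A) \ Par G u v with hXdef
  set D := S \ A' with hDdef
  have hPsub : Par G u v ⊆ G.cut A := Par_subset_cut huA hvA
  have hParCard : 4 ≤ (Par G u v).card := by rw [Par_card]; exact hm4
  have hXcard : X.card ≤ 1 := by
    rw [hXdef, Finset.card_sdiff_of_subset hPsub]
    omega
  have huS : u ∉ S := Finset.notMem_erase _ _
  have hvS : v ∉ S := fun h => hvA (Finset.mem_of_mem_erase h)
  have d1 : ∀ e (a b : G.V), G.ends e = s(a, b) → a ∈ S → e ∉ X → b ∈ A := by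
    intro e a b hab haS heX
    by_cases hc : e ∈ G.cut A
    · exfalso
      have heP : e ∈ Par G u v := by
        by_contra hne
        exact heX (Finset.mem_sdiff.2 ⟨hc, hne⟩)
      have := mem_Par.1 heP
      rw [hab] at this
      rcases Sym2.eq_iff.1 this with ⟨h1, _⟩ | ⟨h1, _⟩
      · exact huS (h1 ▸ haS)
      · exact hvS (h1 ▸ haS)
    · by_contra hbA
      exact hc (mem_cut_of_ends hab (Finset.mem_of_mem_erase haS) hbA)
  have hxD : x ∈ D := Finset.mem_sdiff.2 ⟨hxS, hxA'⟩
  have huD : u ∉ D := fun h => huS (Finset.mem_sdiff.1 h).1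
  have hvD : v ∉ D := fun h => hvS (Finset.mem_sdiff.1 h).1
  have hD3 : 3 ≤ (G.cut D).card := h5.1.1 D ⟨x, hxD⟩ (ne_univ_of_not_mem huD)
  have hsub : (G.cut D) \ X ⊆ G.cut A' := by
    intro e he
    obtain ⟨heD, heX⟩ := Finset.mem_sdiff.1 he
    obtain ⟨a, ha, b, hb, hab⟩ := mem_cut.1 heD
    rw [Finset.mem_compl] at hb
    have haS : a ∈ S := (Finset.mem_sdiff.1 ha).1
    have haA' : a ∉ A' := (Finset.mem_sdiff.1 ha).2
    have hbA : b ∈ A := d1 e a b hab haS heX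
    have hbA' : b ∈ A' := by
      by_cases hbu : b = u
      · exact hbu ▸ huA'
      · have hbS : b ∈ S := Finset.mem_erase.2 ⟨hbu, hbA⟩
        by_contra hbA'
        exact hb (Finset.mem_sdiff.2 ⟨hbS, hbA'⟩)
    exact mem_cut_of_ends' hab haA' hbA'
  have hdisj : Disjoint (Par G u v) ((G.cut D) \ X) := by
    rw [Finset.disjoint_left]
    intro e heP heD
    have heD' := (Finset.mem_sdiff.1 heD).1
    rcases cut_cases (mem_Par.1 heP) heD' with ⟨h1, _⟩ | ⟨h1, _⟩
    · exact huD h1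
    · exact hvD h1
  have hsub2 : Par G u v ∪ ((G.cut D) \ X) ⊆ G.cut A' :=
    Finset.union_subset (Par_subset_cut huA' hvA') hsub
  have hucard : (Par G u v ∪ ((G.cut D) \ X)).card
      = (Par G u v).card + ((G.cut D) \ X).card :=
    Finset.card_union_of_disjoint hdisj
  have hsd : (G.cut D).card - X.card ≤ ((G.cut D) \ X).card := Finset.le_card_sdiff _ _
  have hmain : (Par G u v).card + ((G.cut D) \ X).card ≤ (G.cut A').card := by
    rw [← hucard]
    exact Finset.card_le_card hsub2
  constructor
  · omega
  · intro h6
    have hsd2 : ((G.cut D) \ X).card = 2 := by omega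
    have hD3' : (G.cut D).card = 3 := by
      have h1 : (G.cut D) \ X ⊆ G.cut D := Finset.sdiff_subset
      have h2 := Finset.card_le_card h1
      omega
    have hX1 : X.card = 1 := by omega
    obtain ⟨f, hXf⟩ := Finset.card_eq_one.1 hX1
    have hfD : f ∈ G.cut D := by
      by_contra hfD
      have heq : (G.cut D) \ X = G.cut D := by
        rw [hXf]
        exact Finset.sdiff_eq_self_of_disjoint (by simp [Finset.disjoint_singleton_right, hfD])
      rw [heq] at hsd2
      omega
    have hPar4 : (Par G u v).card = 4 := by omega
    refine ⟨f, hXf, hfD, hD3', ?_⟩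
    have h62 : (G.cut A').card ≤ (Par G u v ∪ (G.cut D \ X)).card := by
      rw [hucard, hPar4, hsd2, h6]
    have h63 := Finset.eq_of_subset_of_card_le hsub2 h62
    rw [← hXf]
    exact h63.symm
lemma w5_splitOff (h5 : G.Weakly5EC) {u v x : G.V} {e₀ e₁ : G.E}
    (he₀ : G.ends e₀ = s(u, v)) (he₁ : G.ends e₁ = s(x, u)) (h01 : e₀ ≠ e₁)
    (hxv : x ≠ v) (hxu : x ≠ u)
    (hcore6 : ∀ A' : Finset G.V, u ∈ A' → x ∉ A' → v ∉ A' → 6 ≤ (G.cut A').card)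
    (htight : ∀ A' : Finset G.V, u ∈ A' → x ∉ A' → v ∉ A' →
      3 ≤ A'.card → 3 ≤ A'ᶜ.card → (G.cut A').card = 6 → False) :
    (splitOff G e₀ e₁ x v hxv).Weakly5EC := by
  have key1 : ∀ A' : Finset G.V, A'.Nonempty → A' ≠ Finset.univ → u ∈ A' →
      (3 ≤ ((splitOff G e₀ e₁ x v hxv).cut A').card) ∧
      (((splitOff G e₀ e₁ x v hxv).cut A').card = 3 → A'.card = 1 ∨ A'ᶜ.card = 1) ∧
      (((splitOff G e₀ e₁ x v hxv).cut A').card = 4 → A'.card ≤ 2 ∨ A'ᶜ.card ≤ 2) := by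
    intro A' hne hnu huA'
    have hsc := splitOff_cut (hxv := hxv) h01 A'
    have h0iff : e₀ ∈ G.cut A' ↔ v ∉ A' := by
      rw [cross_iff he₀]
      constructor
      · rintro (⟨_, h⟩ | ⟨_, h⟩)
        · exact h
        · exact absurd huA' h
      · intro h; exact Or.inl ⟨huA', h⟩
    have h1iff : e₁ ∈ G.cut A' ↔ x ∉ A' := by
      rw [cross_iff he₁]
      constructor
      · rintro (⟨_, h'⟩ | ⟨_, h⟩)
        · exact absurd huA' h'
        · exact h
      · intro h; exact Or.inr ⟨huA', h⟩
    by_cases hv : v ∈ A' <;> by_cases hx : x ∈ A'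
    · have h0 : e₀ ∉ G.cut A' := fun h => (h0iff.1 h) hv
      have h1 : e₁ ∉ G.cut A' := fun h => (h1iff.1 h) hx
      have hchi : ¬ ((x ∈ A' ∧ v ∉ A') ∨ (v ∈ A' ∧ x ∉ A')) := by tauto
      have hcc : ((splitOff G e₀ e₁ x v hxv).cut A').card = (G.cut A').card := by
        rw [hsc, if_neg hchi, Finset.erase_eq_of_notMem h0, Finset.erase_eq_of_notMem h1]
        omega
      rw [hcc]
      exact ⟨h5.1.1 A' hne hnu, h5.1.2 A' hne hnu, h5.2 A' hne hnu⟩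
    · have h0 : e₀ ∉ G.cut A' := fun h => (h0iff.1 h) hv
      have h1 : e₁ ∈ (G.cut A').erase e₀ := by
        rw [Finset.erase_eq_of_notMem h0]
        exact h1iff.2 hx
      have hcc : ((splitOff G e₀ e₁ x v hxv).cut A').card = (G.cut A').card := by
        rw [hsc, if_pos (Or.inr ⟨hv, hx⟩), Finset.erase_eq_of_notMem h0]
        have k1 := Finset.card_erase_add_one (h1iff.2 hx)
        omega
      rw [hcc]
      exact ⟨h5.1.1 A' hne hnu, h5.1.2 A' hne hnu, h5.2 A' hne hnu⟩
    · have h0 : e₀ ∈ G.cut A' := h0iff.2 hv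
      have h1 : e₁ ∉ (G.cut A').erase e₀ := by
        intro h
        exact (h1iff.1 (Finset.mem_of_mem_erase h)) hx
      have hcc : ((splitOff G e₀ e₁ x v hxv).cut A').card = (G.cut A').card := by
        rw [hsc, if_pos (Or.inl ⟨hx, hv⟩), Finset.erase_eq_of_notMem h1]
        have k2 := Finset.card_erase_add_one h0
        omega
      rw [hcc]
      exact ⟨h5.1.1 A' hne hnu, h5.1.2 A' hne hnu, h5.2 A' hne hnu⟩
    · have h6 := hcore6 A' huA' hx hv
      have h0 : e₀ ∈ G.cut A' := h0iff.2 hv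
      have h1 : e₁ ∈ (G.cut A').erase e₀ :=
        Finset.mem_erase.2 ⟨Ne.symm h01, h1iff.2 hx⟩
      have hchi : ¬ ((x ∈ A' ∧ v ∉ A') ∨ (v ∈ A' ∧ x ∉ A')) := by tauto
      have hcc : ((splitOff G e₀ e₁ x v hxv).cut A').card + 2 = (G.cut A').card := by
        rw [hsc, if_neg hchi]
        have k1 := Finset.card_erase_add_one h1
        have k2 := Finset.card_erase_add_one h0
        omega
      refine ⟨by omega, ?_, ?_⟩
      · intro h3
        exact absurd (by omega : (6:ℕ) ≤ 5) (by norm_num)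
      · intro h4
        by_contra hcon
        push_neg at hcon
        exact htight A' huA' hx hv (by omega) (by omega) (by omega)
  have key : ∀ A' : Finset G.V, A'.Nonempty → A' ≠ Finset.univ →
      (3 ≤ ((splitOff G e₀ e₁ x v hxv).cut A').card) ∧
      (((splitOff G e₀ e₁ x v hxv).cut A').card = 3 → A'.card = 1 ∨ A'ᶜ.card = 1) ∧
      (((splitOff G e₀ e₁ x v hxv).cut A').card = 4 → A'.card ≤ 2 ∨ A'ᶜ.card ≤ 2) := by
    intro A' hne hnu
    by_cases hu : u ∈ A'
    · exact key1 A' hne hnu hu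
    · obtain ⟨z, hz⟩ := hne
      have h1 := key1 A'ᶜ ⟨u, Finset.mem_compl.2 hu⟩
        (ne_univ_of_not_mem (show z ∉ A'ᶜ by simp [hz]))
        (Finset.mem_compl.2 hu)
      rw [cut_compl, compl_compl] at h1
      exact ⟨h1.1, fun h => (h1.2.1 h).symm, fun h => (h1.2.2 h).symm⟩
  exact ⟨⟨fun A hA hAu => (key A hA hAu).1, fun A hA hAu => (key A hA hAu).2.1⟩,
    fun A hA hAu => (key A hA hAu).2.2⟩

lemma splitOff_not_regular {u v x : G.V} {e₀ e₁ : G.E}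
    (he₀ : G.ends e₀ = s(u, v)) (he₁ : G.ends e₁ = s(x, u)) (h01 : e₀ ≠ e₁)
    (hxv : x ≠ v) (hux : u ≠ x) (huv : u ≠ v) (hdeg : 6 ≤ G.deg u) :
    ¬ (splitOff G e₀ e₁ x v hxv).IsRegular 3 := by
  intro hreg
  have h1 := splitOff_deg_u (hxv := hxv) he₀ he₁ h01 hux huv
  have h3 := hreg u
  rw [h3] at h1
  omega

lemma bad_contra (G : Multigraph) (h5 : G.Weakly5EC) (hno : ¬ Immerses K33 G)
    (hmin : ∀ G' : Multigraph, Fintype.card G'.V = Fintype.card G.V →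
      G'.Weakly5EC → ¬ Immerses K33 G' → ¬ (G'.IsRegular 3 ∧ G'.Planar) →
      Fintype.card G.E ≤ Fintype.card G'.E)
    (hn : 6 ≤ Fintype.card G.V) {u v : G.V} (huv : u ≠ v) (hm : 4 ≤ G.mult u v)
    {e₀ : G.E} (he₀ : G.ends e₀ = s(u, v)) (hbad : Bad G u v) : False := by
  classical
  obtain ⟨A, huA, hvA, hcase⟩ := hbad
  have hcut5 : (G.cut A).card ≤ 5 := by
    rcases hcase with ⟨h, _, _⟩ | ⟨h, _, _⟩ <;> omega
  have hA2 : 2 ≤ A.card := by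
    rcases hcase with ⟨_, h, _⟩ | ⟨_, h, _⟩ <;> omega
  set S := A.erase u with hSdef
  have huS : u ∉ S := Finset.notMem_erase _ _
  have hvS : v ∉ S := fun h => hvA (Finset.mem_of_mem_erase h)
  have hSsubA : S ⊆ A := Finset.erase_subset _ _
  have hScard : S.card = A.card - 1 := Finset.card_erase_of_mem huA
  have hSne : S.Nonempty := Finset.card_pos.1 (by omega)
  set X := (G.cut A) \ Par G u v with hXdef
  have hPsub : Par G u v ⊆ G.cut A := Par_subset_cut huA hvA
  have hP4 : 4 ≤ (Par G u v).card := by rw [Par_card]; exact hm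
  have hXcard : X.card ≤ 1 := by
    rw [hXdef, Finset.card_sdiff_of_subset hPsub]
    omega
  have d1 : ∀ e (a b : G.V), G.ends e = s(a, b) → a ∈ S → e ∉ X → b ∈ A := by
    intro e a b hab haS heX
    by_cases hc : e ∈ G.cut A
    · exfalso
      have heP : e ∈ Par G u v := by
        by_contra hne
        exact heX (Finset.mem_sdiff.2 ⟨hc, hne⟩)
      have h2 := mem_Par.1 heP
      rw [hab] at h2
      rcases Sym2.eq_iff.1 h2 with ⟨hh1, _⟩ | ⟨hh1, _⟩
      · exact huS (hh1 ▸ haS)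
      · exact hvS (hh1 ▸ haS)
    · by_contra hbA
      exact hc (mem_cut_of_ends hab (hSsubA haS) hbA)
  have hScut3 : 3 ≤ (G.cut S).card := h5.1.1 S hSne (ne_univ_of_not_mem huS)
  have hcutS_u : ∀ e ∈ (G.cut S) \ X, u ∈ G.ends e ∧ ∃ a ∈ S, G.ends e = s(a, u) := by
    intro e he
    obtain ⟨heS, heX⟩ := Finset.mem_sdiff.1 he
    obtain ⟨a, ha, b, hb, hab⟩ := mem_cut.1 heS
    rw [Finset.mem_compl] at hb
    have hbA : b ∈ A := d1 e a b hab ha heX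
    have hbu : b = u := by
      by_contra hbu
      exact hb (Finset.mem_erase.2 ⟨hbu, hbA⟩)
    subst hbu
    exact ⟨by rw [hab]; simp, a, ha, hab⟩
  have hdeg6 : 6 ≤ G.deg u := by
    have hsub1 : Par G u v ⊆ Finset.univ.filter (fun e => u ∈ G.ends e) := by
      intro e he
      simp only [Finset.mem_filter, Finset.mem_univ, true_and, mem_Par.1 he, Sym2.mem_iff]
      simp
    have hsub2 : (G.cut S) \ X ⊆ Finset.univ.filter (fun e => u ∈ G.ends e) := by
      intro e he
      simp only [Finset.mem_filter, Finset.mem_univ, true_and]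
      exact (hcutS_u e he).1
    have hdisj : Disjoint (Par G u v) ((G.cut S) \ X) := by
      rw [Finset.disjoint_left]
      intro e heP heD
      have h1 := (Finset.mem_sdiff.1 heD).1
      rcases cut_cases (mem_Par.1 heP) h1 with ⟨h2, _⟩ | ⟨h2, _⟩
      · exact huS h2
      · exact hvS h2
    have hc1 := Finset.card_union_of_disjoint hdisj
    have hc2 := Finset.card_le_card (Finset.union_subset hsub1 hsub2)
    have hc3 := Finset.le_card_sdiff X (G.cut S)
    show 6 ≤ (Finset.univ.filter (fun e => u ∈ G.ends e)).card
    omega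
  -- the common closing step: given a suitable split-off datum, contradict minimality
  have hfinish : ∀ (x : G.V), x ∈ S → ∀ (e₁ : G.E), G.ends e₁ = s(x, u) →
      (∀ A' : Finset G.V, u ∈ A' → x ∉ A' → v ∉ A' →
        3 ≤ A'.card → 3 ≤ A'ᶜ.card → (G.cut A').card = 6 → False) → False := by
    intro x hxS e₁ he₁ htight
    have hxu : x ≠ u := fun h => huS (h ▸ hxS)
    have hxv : x ≠ v := fun h => hvS (h ▸ hxS)
    have h01 : e₀ ≠ e₁ := by
      intro h
      rw [← h, he₀] at he₁
      rcases Sym2.eq_iff.1 he₁ with ⟨h1, h2⟩ | ⟨h1, h2⟩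
      · exact huv h2.symm
      · exact hxv h2.symm
    have hcore6 : ∀ A' : Finset G.V, u ∈ A' → x ∉ A' → v ∉ A' → 6 ≤ (G.cut A').card :=
      fun A' ha hb hc => (core h5 huv hm huA hvA hxS hcut5 ha hb hc).1
    have h5' := w5_splitOff h5 he₀ he₁ h01 hxv hxu hcore6 htight
    have hreg' := splitOff_not_regular (hxv := hxv) he₀ he₁ h01 (Ne.symm hxu) huv hdeg6
    have hno'' := not_immerses_splitOff (hxv := hxv) K33 he₀ he₁ h01 hno
    have hcV : Fintype.card (splitOff G e₀ e₁ x v hxv).V = Fintype.card G.V := rfl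
    have hminle := hmin _ hcV h5' hno'' (fun h => hreg' h.1)
    have hE := splitOff_card_E (G := G) (e₀ := e₀) (e₁ := e₁) (x := x) (v := v)
      (hxv := hxv) h01
    omega
  by_cases hX0 : X = ∅
  · -- Case A : no extra edge in the bad cut
    obtain ⟨e', he'⟩ := Finset.card_pos.1 (show 0 < (G.cut S).card by omega)
    have he'X : e' ∉ X := by rw [hX0]; simp
    obtain ⟨humem, a, haS, hab⟩ := hcutS_u e' (Finset.mem_sdiff.2 ⟨he', he'X⟩)
    refine hfinish a haS e' hab ?_
    intro A' ha hb hc hd he hf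
    obtain ⟨f, hXf, _, _, _⟩ := (core h5 huv hm huA hvA haS hcut5 ha hb hc).2 hf
    have h7 : f ∈ X := by rw [hXdef, hXf]; simp
    rw [hX0] at h7
    simp at h7
  · have hX1 : X.card = 1 := by
      have := Finset.card_pos.2 (Finset.nonempty_iff_ne_empty.2 hX0)
      omega
    obtain ⟨f₀, hXf₀⟩ := Finset.card_eq_one.1 hX1
    have hf₀X : f₀ ∈ X := by rw [hXf₀]; simp
    have hf₀cut : f₀ ∈ G.cut A := (Finset.mem_sdiff.1 (hXdef ▸ hf₀X)).1
    have hf₀Par : f₀ ∉ Par G u v := (Finset.mem_sdiff.1 (hXdef ▸ hf₀X)).2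
    obtain ⟨af, haf, bf, hbf, habf⟩ := mem_cut.1 hf₀cut
    rw [Finset.mem_compl] at hbf
    have hbfS : bf ∉ S := fun h => hbf (hSsubA h)
    have hfeq : ∀ {g : G.E}, ((G.cut A) \ Par G u v) = {g} → g = f₀ := by
      intro g hg
      have : g ∈ X := by rw [hXdef, hg]; simp
      rw [hXf₀] at this
      simpa using this
    by_cases hafu : af = u
    · -- Case B1 : the extra edge is incident with u
      subst hafu
      obtain ⟨e', he'⟩ := Finset.card_pos.1 (show 0 < (G.cut S).card by omega)
      have he'X : e' ∉ X := by
        rw [hXf₀]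
        simp only [Finset.mem_singleton]
        intro h
        subst h
        rcases cut_cases habf he' with ⟨h1, _⟩ | ⟨h1, _⟩
        · exact huS h1
        · exact hbfS h1
      obtain ⟨humem, a, haS, hab⟩ := hcutS_u e' (Finset.mem_sdiff.2 ⟨he', he'X⟩)
      refine hfinish a haS e' hab ?_
      intro A' ha hb hc hd he hf
      obtain ⟨f, hXf, hfD, _, _⟩ := (core h5 huv hm huA hvA haS hcut5 ha hb hc).2 hf
      rw [hfeq hXf] at hfD
      rcases cut_cases habf hfD with ⟨h1, _⟩ | ⟨h1, _⟩
      · exact huS (Finset.mem_sdiff.1 h1).1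
      · exact hbfS (Finset.mem_sdiff.1 h1).1
    · have hafS : af ∈ S := Finset.mem_erase.2 ⟨hafu, haf⟩
      by_cases hex : ∃ (e' : G.E) (z : G.V), z ∈ S ∧ z ≠ af ∧ G.ends e' = s(z, u)
      · -- Case B2, first branch : there is a u-edge into S avoiding the f₀-endpoint
        obtain ⟨e', z, hzS, hzaf, hz⟩ := hex
        refine hfinish z hzS e' hz ?_
        intro A' ha hb hc hd he hf
        obtain ⟨f, hXf, hfD, hD3, _⟩ := (core h5 huv hm huA hvA hzS hcut5 ha hb hc).2 hf
        rw [hfeq hXf] at hfD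
        -- D is a singleton containing both z and af: contradiction
        have hDne : (A.erase u \ A').Nonempty := ⟨z, Finset.mem_sdiff.2 ⟨hzS, hb⟩⟩
        have hDnu : (A.erase u \ A') ≠ Finset.univ :=
          ne_univ_of_not_mem (fun h => huS (Finset.mem_sdiff.1 h).1)
        have hD1 := h5.1.2 _ hDne hDnu hD3
        have hDc : 2 ≤ (A.erase u \ A')ᶜ.card := by
          have hsubp : ({u, v} : Finset G.V) ⊆ (A.erase u \ A')ᶜ := by
            intro z' hz'
            rw [Finset.mem_compl]
            rcases Finset.mem_insert.1 hz' with rfl | hz'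
            · exact fun h => huS (Finset.mem_sdiff.1 h).1
            · rw [Finset.mem_singleton] at hz'
              subst hz'
              exact fun h => hvS (Finset.mem_sdiff.1 h).1
          have := Finset.card_le_card hsubp
          rw [pair_card huv] at this
          exact this
        have hDcard1 : (A.erase u \ A').card = 1 := by
          rcases hD1 with h | h
          · exact h
          · omega
        obtain ⟨d, hd⟩ := Finset.card_eq_one.1 hDcard1
        have hafD : af ∈ A.erase u \ A' := by
          rcases cut_cases habf hfD with ⟨h1, _⟩ | ⟨h1, _⟩
          · exact h1
          · exact absurd (Finset.mem_sdiff.1 h1).1 (fun h => hbfS h)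
        have hzD : z ∈ A.erase u \ A' := Finset.mem_sdiff.2 ⟨hzS, hb⟩
        rw [hd] at hafD hzD
        rw [Finset.mem_singleton] at hafD hzD
        exact hzaf (hzD.trans hafD.symm)
      · -- Case B2, second branch : every u-edge into S ends at af
        push_neg at hex
        obtain ⟨e', he'⟩ := Finset.card_pos.1
          (show 0 < ((G.cut S) \ X).card by
            have := Finset.le_card_sdiff X (G.cut S); omega)
        obtain ⟨humem, a, haS, hab⟩ := hcutS_u e' he'
        have haaf : a = af := by
          by_contra hne
          exact (hex e' a haS hne) hab
        have hab' : G.ends e' = s(af, u) := by rw [← haaf]; exact hab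
        refine hfinish af hafS e' hab' ?_
        intro A' ha hb hc hd he hf
        obtain ⟨f, hXf, hfD, hD3, hEq⟩ := (core h5 huv hm huA hvA hafS hcut5 ha hb hc).2 hf
        rw [hfeq hXf] at hfD hEq
        have hafD : af ∈ A.erase u \ A' := by
          rcases cut_cases habf hfD with ⟨h1, _⟩ | ⟨h1, _⟩
          · exact h1
          · exact absurd (Finset.mem_sdiff.1 h1).1 (fun h => hbfS h)
        have hafA' : af ∉ A' := (Finset.mem_sdiff.1 hafD).2
        have hfA' : f₀ ∉ G.cut A' := by
          rw [hEq]
          intro h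
          rcases Finset.mem_union.1 h with h | h
          · exact hf₀Par h
          · exact (Finset.mem_sdiff.1 h).2 (by simp)
        have hbfA' : bf ∉ A' := by
          intro h
          exact hfA' (mem_cut_of_ends' habf hafA' h)
        -- the set C of A'-vertices outside A (other than v) is empty
        have hCempty : (A' \ A).erase v = ∅ := by
          by_contra hCne
          have hCne' : ((A' \ A).erase v).Nonempty := Finset.nonempty_iff_ne_empty.2 hCne
          have hCnu : (A' \ A).erase v ≠ Finset.univ :=
            ne_univ_of_not_mem (fun h => (Finset.mem_sdiff.1 (Finset.mem_of_mem_erase h)).2 huA)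
          have h3C := h5.1.1 _ hCne' hCnu
          have hccut : G.cut ((A' \ A).erase v) = ∅ := by
            rw [Finset.eq_empty_iff_forall_notMem]
            intro e he2
            obtain ⟨c1, hc1, c2, hc2, hc12⟩ := mem_cut.1 he2
            rw [Finset.mem_compl] at hc2
            have hc1v : c1 ≠ v := (Finset.mem_erase.1 hc1).1
            have hc1A' : c1 ∈ A' := (Finset.mem_sdiff.1 (Finset.mem_of_mem_erase hc1)).1
            have hc1A : c1 ∉ A := (Finset.mem_sdiff.1 (Finset.mem_of_mem_erase hc1)).2
            have hef : e ≠ f₀ := by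
              intro h
              subst h
              rw [habf] at hc12
              rcases Sym2.eq_iff.1 hc12 with ⟨h1, _⟩ | ⟨_, h2⟩
              · exact hc1A (by rw [← h1]; exact hSsubA hafS)
              · exact hbfA' (by rw [h2]; exact hc1A')
            have heX : e ∉ X := by
              rw [hXf₀, Finset.mem_singleton]
              exact hef
            -- e does not cross A, so c2 ∉ A
            have hc2A : c2 ∉ A := by
              intro h
              have hecut : e ∈ G.cut A := mem_cut_of_ends' hc12 hc1A h
              have heP : e ∈ Par G u v := by
                by_contra hne
                exact heX (hXdef ▸ Finset.mem_sdiff.2 ⟨hecut, hne⟩)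
              have h2 := mem_Par.1 heP
              rw [hc12] at h2
              rcases Sym2.eq_iff.1 h2 with ⟨hh1, _⟩ | ⟨hh1, _⟩
              · exact hc1A (by rw [hh1]; exact huA)
              · exact hc1v hh1
            -- c2 ∉ A': otherwise c2 would be in C
            have hc2A' : c2 ∉ A' := by
              intro h
              by_cases hc2v : c2 = v
              · exact (hc (hc2v ▸ h)).elim
              · exact hc2 (Finset.mem_erase.2 ⟨hc2v,
                  Finset.mem_sdiff.2 ⟨h, hc2A⟩⟩)
            -- hence e crosses A', which is impossible
            have hecutA' : e ∈ G.cut A' := mem_cut_of_ends hc12 hc1A' hc2A'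
            rw [hEq] at hecutA'
            rcases Finset.mem_union.1 hecutA' with h | h
            · have h2 := mem_Par.1 h
              rw [hc12] at h2
              rcases Sym2.eq_iff.1 h2 with ⟨hh1, _⟩ | ⟨hh1, _⟩
              · exact hc1A (by rw [hh1]; exact huA)
              · exact hc1v hh1
            · have h2 := (Finset.mem_sdiff.1 h).1
              rcases cut_cases hc12 h2 with ⟨h3, _⟩ | ⟨h3, _⟩
              · exact hc1A (hSsubA (Finset.mem_sdiff.1 h3).1)
              · exact hc2A (hSsubA (Finset.mem_sdiff.1 h3).1)
          rw [hccut] at h3C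
          simp at h3C
        -- the set S₂ = A' minus u is nonempty with a too-small cut
        have hS₂S : ∀ z', z' ∈ A'.erase u → z' ∈ S := by
          intro z' hz'
          have hz'u : z' ≠ u := (Finset.mem_erase.1 hz').1
          have hz'A' : z' ∈ A' := Finset.mem_of_mem_erase hz'
          by_cases hz'A : z' ∈ A
          · exact Finset.mem_erase.2 ⟨hz'u, hz'A⟩
          · exfalso
            have hz'v : z' ≠ v := fun h => hc (h ▸ hz'A')
            have : z' ∈ (A' \ A).erase v :=
              Finset.mem_erase.2 ⟨hz'v, Finset.mem_sdiff.2 ⟨hz'A', hz'A⟩⟩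
            rw [hCempty] at this
            simp at this
        have hS₂card : (A'.erase u).card = A'.card - 1 := Finset.card_erase_of_mem ha
        have hS₂ne : (A'.erase u).Nonempty := Finset.card_pos.1 (by omega)
        have hS₂nu : A'.erase u ≠ Finset.univ :=
          ne_univ_of_not_mem (Finset.notMem_erase u A')
        have h3S₂ := h5.1.1 _ hS₂ne hS₂nu
        have hsubS₂ : G.cut (A'.erase u) ⊆ (G.cut (A.erase u \ A')) \ {f₀} := by
          intro e he2
          obtain ⟨c1, hc1, c2, hc2, hc12⟩ := mem_cut.1 he2
          rw [Finset.mem_compl] at hc2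
          have hc1S : c1 ∈ S := hS₂S c1 hc1
          have hc1A' : c1 ∈ A' := Finset.mem_of_mem_erase hc1
          have hef : e ≠ f₀ := by
            intro h
            subst h
            rw [habf] at hc12
            rcases Sym2.eq_iff.1 hc12 with ⟨h1, _⟩ | ⟨_, h2⟩
            · exact hafA' (by rw [h1]; exact hc1A')
            · exact hbf (by rw [h2]; exact hSsubA hc1S)
          have heX : e ∉ X := by
            rw [hXf₀, Finset.mem_singleton]
            exact hef
          have hc2A : c2 ∈ A := d1 e c1 c2 hc12 hc1S heX
          have hc2u : c2 ≠ u := by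
            intro h
            subst h
            have : c1 = af := by
              by_contra hne
              exact (hex e c1 hc1S hne) hc12
            exact hafA' (this ▸ hc1A')
          have hc2S : c2 ∈ S := Finset.mem_erase.2 ⟨hc2u, hc2A⟩
          have hc2A' : c2 ∉ A' := by
            intro h
            exact hc2 (Finset.mem_erase.2 ⟨hc2u, h⟩)
          have hc2D : c2 ∈ A.erase u \ A' := Finset.mem_sdiff.2 ⟨hc2S, hc2A'⟩
          have hc1D : c1 ∉ A.erase u \ A' := fun h => (Finset.mem_sdiff.1 h).2 hc1A'
          exact Finset.mem_sdiff.2 ⟨mem_cut_of_ends' hc12 hc1D hc2D,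
            by rw [Finset.mem_singleton]; exact hef⟩
        have hcard2 : ((G.cut (A.erase u \ A')) \ {f₀}).card ≤ 2 := by
          have hsm : ({f₀} : Finset G.E) ⊆ G.cut (A.erase u \ A') := by
            intro g hg
            rw [Finset.mem_singleton] at hg
            exact hg ▸ hfD
          rw [Finset.card_sdiff_of_subset hsm, hD3]
          simp
        have := Finset.card_le_card hsubS₂
        omega

end MainAux



end Multigraph

open Multigraph in
/-- Let `G` be a weakly 5-edge-connected graph with at least 6 vertices and no
`K_{3,3}` immersion, not 3-regular planar, minimal in edge count among such
graphs on the same number of vertices.  Then no edge of `G` has multiplicity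
greater than three. -/
theorem minimal_C5_multiplicity_le_three (G : Multigraph)
    (h5 : G.Weakly5EC) (hno : ¬ Immerses K33 G)
    (hnrp : ¬ (G.IsRegular 3 ∧ G.Planar))
    (hmin : ∀ G' : Multigraph, Fintype.card G'.V = Fintype.card G.V →
      G'.Weakly5EC → ¬ Immerses K33 G' → ¬ (G'.IsRegular 3 ∧ G'.Planar) →
      Fintype.card G.E ≤ Fintype.card G'.E)
    (hn : 6 ≤ Fintype.card G.V) :
    ∀ u v : G.V, G.mult u v ≤ 3 := by
  intro u v
  by_contra hm4
  push_neg at hm4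
  have hm : 4 ≤ G.mult u v := hm4
  have huv : u ≠ v := by
    intro h
    rw [h, mult_self] at hm
    omega
  obtain ⟨e₀, he₀⟩ : ∃ e₀ : G.E, G.ends e₀ = s(u, v) := by
    have hpos : 0 < (Par G u v).card := by
      have := Par_card (G := G) u v
      omega
    obtain ⟨e₀, he₀⟩ := Finset.card_pos.1 hpos
    exact ⟨e₀, mem_Par.1 he₀⟩
  by_cases hbad : Bad G u v
  · exact bad_contra G h5 hno hmin hn huv hm he₀ hbad
  · have h5' := w5_delEdge h5 hm he₀ hbad
    have hno' := not_immerses_delEdge K33 e₀ hno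
    have hreg' := delEdge_not_regular h5 hn huv hm he₀
    have hcV : Fintype.card (delEdge G e₀).V = Fintype.card G.V := rfl
    have hminle := hmin _ hcV h5' hno' (fun h => hreg' h.1)
    have hE := delEdge_card_E e₀
    omega
end

section
/- The wheel with five spokes W5 (a 5-cycle plus a central vertex adjacent to all five cycle vertices) is internally 5-edge-connected, planar, not 3-regular, and contains no immersion of K_{3,3}. -/
namespace Multigraph

/-- The wheel with five spokes: a 5-cycle together with a central vertex
(`none`) adjacent to all five cycle vertices. -/
def W5 : Multigraph where
  V := Option (Fin 5)
  E := Fin 5 ⊕ Fin 5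
  ends e := match e with
    | .inl i => s(some i, some (i + 1))
    | .inr i => s(none, some i)
  noLoop e := match e with
    | .inl i => by
        simp only [Sym2.mk_isDiag_iff, Option.some.injEq]
        intro h
        exact absurd (congrArg Fin.val h) (by fin_cases i <;> decide)
    | .inr i => by simp [Sym2.mk_isDiag_iff]

end Multigraph

namespace Multigraph
variable {G : Multigraph}

lemma Walk.start_mem_support {u v : G.V} (p : G.Walk u v) : u ∈ p.support := by
  cases p <;> simp [Walk.support]

lemma Walk.end_mem_support {u v : G.V} (p : G.Walk u v) : v ∈ p.support := by
  induction p with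
  | nil => simp [Walk.support]
  | cons e h p ih => simp [Walk.support, ih]

lemma Walk.mem_support_of_mem_edges {u v : G.V} (p : G.Walk u v) {g : G.E}
    (hg : g ∈ p.edges) {x : G.V} (hx : x ∈ G.ends g) : x ∈ p.support := by
  induction p with
  | nil => simp [Walk.edges] at hg
  | cons e h p ih =>
    simp only [Walk.edges, List.mem_cons] at hg
    rcases hg with rfl | hg
    · rw [h, Sym2.mem_iff] at hx
      rcases hx with rfl | rfl
      · simp [Walk.support]
      · simp [Walk.support, Walk.start_mem_support]
    · simp [Walk.support, ih hg]

lemma Walk.exists_edge_start {u v : G.V} (p : G.Walk u v) (h : u ≠ v) :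
    ∃ g ∈ p.edges, u ∈ G.ends g := by
  cases p with
  | nil => exact absurd rfl h
  | cons e he p => exact ⟨e, by simp [Walk.edges], by rw [he]; simp⟩

lemma Walk.exists_edge_end {u w : G.V} (p : G.Walk u w) (h : u ≠ w) :
    ∃ g ∈ p.edges, w ∈ G.ends g := by
  induction p with
  | nil => exact absurd rfl h
  | @cons u mid w e he p ih =>
    by_cases hmw : mid = w
    · subst hmw
      exact ⟨e, by simp [Walk.edges], by rw [he]; simp⟩
    · obtain ⟨g, hg, hgw⟩ := ih hmw
      exact ⟨g, by simp [Walk.edges, hg], hgw⟩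

lemma Walk.edges_eq_nil_of_isPath_self {v : G.V} (p : G.Walk v v) (hp : p.IsPath) :
    p.edges = [] := by
  cases p with
  | nil => rfl
  | @cons v mid _ e he p =>
    exfalso
    have h1 : v ∈ p.support := p.end_mem_support
    have h2 := (List.nodup_cons.mp hp).1
    exact h2 h1

lemma Walk.internal_two_edges {u w : G.V} (p : G.Walk u w) (hp : p.IsPath)
    {v : G.V} (hv : v ∈ p.support) (h1 : v ≠ u) (h2 : v ≠ w) :
    ∃ g₁ ∈ p.edges, ∃ g₂ ∈ p.edges, g₁ ≠ g₂ ∧ v ∈ G.ends g₁ ∧ v ∈ G.ends g₂ := by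
  induction p with
  | nil =>
    simp only [Walk.support, List.mem_singleton] at hv
    exact absurd hv h1
  | @cons u mid w e he p ih =>
    have hp' : p.IsPath := (List.nodup_cons.mp hp).2
    simp only [Walk.support, List.mem_cons] at hv
    rcases hv with rfl | hv
    · exact absurd rfl h1
    by_cases hm : v = mid
    · subst hm
      obtain ⟨g₂, hg₂, hg₂v⟩ := p.exists_edge_start h2
      refine ⟨e, by simp [Walk.edges], g₂, by simp [Walk.edges, hg₂], ?_, by rw [he]; simp, hg₂v⟩
      rintro rfl
      have : u ∈ p.support := p.mem_support_of_mem_edges hg₂ (by rw [he]; simp)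
      exact (List.nodup_cons.mp hp).1 this
    · obtain ⟨g₁, hg₁, g₂, hg₂, hne, hv₁, hv₂⟩ := ih hp' hv hm h2
      exact ⟨g₁, by simp [Walk.edges, hg₁], g₂, by simp [Walk.edges, hg₂], hne, hv₁, hv₂⟩

lemma Walk.structure_three {u w n : G.V} (p : G.Walk u w) (hp : p.IsPath) (huw : u ≠ w)
    (hnu : n ≠ u) (hnw : n ≠ w)
    (hs : ∀ z ∈ p.support, z = u ∨ z = w ∨ z = n) :
    (∃ g, p.edges = [g] ∧ G.ends g = s(u, w)) ∨
    (∃ g₁ g₂, p.edges = [g₁, g₂] ∧ G.ends g₁ = s(u, n) ∧ G.ends g₂ = s(n, w)) := by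
  cases p with
  | nil => exact absurd rfl huw
  | @cons _ mid _ e he p =>
    have hup : u ∉ p.support := (List.nodup_cons.mp hp).1
    have hp' : p.IsPath := (List.nodup_cons.mp hp).2
    have hmidmem : mid ∈ p.support := p.start_mem_support
    have hmidu : mid ≠ u := fun h => hup (h ▸ hmidmem)
    rcases hs mid (by simp [Walk.support, hmidmem]) with h | h | h
    · exact absurd h hmidu
    · subst h
      left
      exact ⟨e, by simp [Walk.edges, p.edges_eq_nil_of_isPath_self hp'], he⟩
    · subst h
      right
      cases p with
      | nil => exact absurd rfl hnw
      | @cons _ mid2 _ e2 he2 q =>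
        have hnq : mid ∉ q.support := (List.nodup_cons.mp hp').1
        have hq : q.IsPath := (List.nodup_cons.mp hp').2
        have hm2 : mid2 ∈ q.support := q.start_mem_support
        have hm2w : mid2 = w := by
          rcases hs mid2 (by simp [Walk.support, hm2]) with h | h | h
          · exact absurd (h ▸ hm2 : u ∈ q.support) (fun hh => hup (by simp [Walk.support, hh]))
          · exact h
          · exact absurd (h ▸ hm2) hnq
        subst hm2w
        exact ⟨e, e2, by simp [Walk.edges, q.edges_eq_nil_of_isPath_self hq], he, he2⟩

end Multigraph

namespace Multigraph

lemma sym2_exists_rep {α : Type*} (s : Sym2 α) : ∃ a b, s = s(a, b) := by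
  induction s using Sym2.ind with
  | _ a b => exact ⟨a, b, rfl⟩

namespace ImmersionData

variable {H G : Multigraph} (D : ImmersionData H G)

/-- The edges of the walk for `e` that are incident to `v`. -/
def S (v : G.V) (e : H.E) : Finset G.E :=
  ((D.walk e).edges.toFinset).filter (fun g => v ∈ G.ends g)

lemma mem_S {v : G.V} {e : H.E} {g : G.E} :
    g ∈ D.S v e ↔ g ∈ (D.walk e).edges ∧ v ∈ G.ends g := by
  simp [S, Finset.mem_filter, List.mem_toFinset]

lemma sum_S_card_le (v : G.V) (s : Finset H.E) :
    ∑ e ∈ s, (D.S v e).card ≤ G.deg v := by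
  rw [← Finset.card_biUnion]
  · apply Finset.card_le_card
    intro g hg
    simp only [Finset.mem_biUnion] at hg
    obtain ⟨e, _, hge⟩ := hg
    simp only [deg, Finset.mem_filter, Finset.mem_univ, true_and]
    exact (D.mem_S.mp hge).2
  · intro e he e' he' hne
    rw [Function.onFun, Finset.disjoint_left]
    intro g hg hg'
    exact D.edgeDisj e e' hne (D.mem_S.mp hg).1 (D.mem_S.mp hg').1

lemma pstart_ne_pend (e : H.E) : D.pstart e ≠ D.pend e := by
  intro hEq
  obtain ⟨a, b, hab⟩ := sym2_exists_rep (H.ends e)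
  have hne : a ≠ b := by
    have := H.noLoop e
    rw [hab, Sym2.mk_isDiag_iff] at this
    exact this
  have h2 := D.ends_eq e
  rw [hab, Sym2.map_pair_eq, hEq, Sym2.eq_iff] at h2
  rcases h2 with ⟨h3, h4⟩ | ⟨h3, h4⟩
  · exact hne (D.inj (h3.symm.trans h4))
  · exact hne (D.inj (h4.symm.trans h3))

lemma one_le_card_S {v : G.V} {e : H.E} (hv : v = D.pstart e ∨ v = D.pend e) :
    1 ≤ (D.S v e).card := by
  rw [Nat.succ_le_iff, Finset.card_pos]
  rcases hv with rfl | rfl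
  · obtain ⟨g, hg, hgv⟩ := (D.walk e).exists_edge_start (D.pstart_ne_pend e)
    exact ⟨g, D.mem_S.mpr ⟨hg, hgv⟩⟩
  · obtain ⟨g, hg, hgv⟩ := (D.walk e).exists_edge_end (D.pstart_ne_pend e)
    exact ⟨g, D.mem_S.mpr ⟨hg, hgv⟩⟩

lemma two_le_card_S {v : G.V} {e : H.E} (hv : v ∈ (D.walk e).support)
    (h1 : v ≠ D.pstart e) (h2 : v ≠ D.pend e) : 2 ≤ (D.S v e).card := by
  obtain ⟨g₁, hg₁, g₂, hg₂, hne, hv₁, hv₂⟩ :=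
    (D.walk e).internal_two_edges (D.isPath e) hv h1 h2
  exact Finset.one_lt_card.mpr
    ⟨g₁, D.mem_S.mpr ⟨hg₁, hv₁⟩, g₂, D.mem_S.mpr ⟨hg₂, hv₂⟩, hne⟩

lemma vmap_endpoint {w : H.V} {e : H.E} (hw : w ∈ H.ends e) :
    D.vmap w = D.pstart e ∨ D.vmap w = D.pend e := by
  have : D.vmap w ∈ Sym2.map D.vmap (H.ends e) := Sym2.mem_map.mpr ⟨w, hw, rfl⟩
  rw [← D.ends_eq e, Sym2.mem_iff] at this
  exact this

lemma deg_le_deg (w : H.V) : H.deg w ≤ G.deg (D.vmap w) := by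
  calc H.deg w = ∑ _e ∈ Finset.univ.filter (fun e => w ∈ H.ends e), 1 := by
        rw [Finset.sum_const, smul_eq_mul, mul_one]; rfl
    _ ≤ ∑ e ∈ Finset.univ.filter (fun e => w ∈ H.ends e), (D.S (D.vmap w) e).card := by
        apply Finset.sum_le_sum
        intro e he
        exact D.one_le_card_S (D.vmap_endpoint (Finset.mem_filter.mp he).2)
    _ ≤ G.deg (D.vmap w) := D.sum_S_card_le _ _

end ImmersionData

lemma not_immerses_K5 : ¬ Immerses K5 W5 := by
  have hK5 : ∀ w : K5.V, K5.deg w = 4 := by decide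
  have hW5 : ∀ j : Fin 5, W5.deg (some j) = 3 := by decide
  rintro ⟨D⟩
  have h4 : ∀ w : Fin 5, 4 ≤ W5.deg (D.vmap w) := by
    intro w
    have := D.deg_le_deg w
    rw [hK5 w] at this
    exact this
  have hnone : ∀ w : Fin 5, D.vmap w = none := by
    intro w
    match hv : D.vmap w with
    | none => rfl
    | some j =>
      have := h4 w
      rw [hv] at this
      rw [hW5 j] at this
      omega
  have h01 : (0 : Fin 5) = 1 := D.inj ((hnone 0).trans (hnone 1).symm)
  exact absurd h01 (by decide)

end Multigraph

namespace Multigraph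

lemma not_immerses_K33 : ¬ Immerses K33 W5 := by
  have hdegsome : ∀ j : Fin 5, W5.deg (some j) = 3 := by decide
  have hdegnone : W5.deg none = 5 := by decide
  have hinc3 : ∀ w : K33.V, (Finset.univ.filter (fun e => w ∈ K33.ends e)).card = 3 := by decide
  have hninc6 : ∀ w : K33.V, (Finset.univ.filter (fun e => w ∉ K33.ends e)).card = 6 := by decide
  have hcard : Fintype.card K33.V = Fintype.card W5.V := by decide
  rintro ⟨D⟩
  have hinj := D.inj
  have hsurj : Function.Surjective D.vmap :=
    ((Fintype.bijective_iff_injective_and_card D.vmap).mpr ⟨hinj, hcard⟩).2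
  -- endpoints of walks
  have hends : ∀ e : K33.E,
      s(D.pstart e, D.pend e) = s(D.vmap (Sum.inl e.1), D.vmap (Sum.inr e.2)) := by
    intro e
    rw [D.ends_eq e]
    exact Sym2.map_pair_eq _ _ _
  -- a vertex whose preimage is incident to the K33-edge e is an endpoint of walk e
  have hnotinc : ∀ (w : K33.V) (e : K33.E),
      D.vmap w ≠ D.pstart e → D.vmap w ≠ D.pend e → w ∉ K33.ends e := by
    intro w e h1 h2 hw
    rcases D.vmap_endpoint hw with h | h
    · exact h1 h
    · exact h2 h
  -- Step A: no walk passes through a rim vertex internally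
  have hrim : ∀ (e : K33.E) (j : Fin 5), some j ∈ (D.walk e).support →
      some j = D.pstart e ∨ some j = D.pend e := by
    intro e j hmem
    by_cases hc1 : some j = D.pstart e
    · exact Or.inl hc1
    by_cases hc2 : some j = D.pend e
    · exact Or.inr hc2
    exfalso
    obtain ⟨w, hw⟩ := hsurj (some j)
    have hwe : w ∉ K33.ends e := hnotinc w e (hw ▸ hc1) (hw ▸ hc2)
    have hem : e ∉ Finset.univ.filter (fun e' => w ∈ K33.ends e') := by
      simp [Finset.mem_filter, hwe]
    have hsum := D.sum_S_card_le (some j)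
      (insert e (Finset.univ.filter (fun e' => w ∈ K33.ends e')))
    rw [hdegsome j, Finset.sum_insert hem] at hsum
    have h2 : 2 ≤ (D.S (some j) e).card := D.two_le_card_S hmem hc1 hc2
    have hge : 3 ≤ ∑ e' ∈ Finset.univ.filter (fun e' => w ∈ K33.ends e'),
        (D.S (some j) e').card := by
      calc 3 = ∑ _e' ∈ Finset.univ.filter (fun e' => w ∈ K33.ends e'), 1 := by
            rw [Finset.sum_const, smul_eq_mul, mul_one, hinc3 w]
        _ ≤ _ := by
            apply Finset.sum_le_sum
            intro e' he'
            have hw' : w ∈ K33.ends e' := (Finset.mem_filter.mp he').2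
            exact D.one_le_card_S (hw ▸ D.vmap_endpoint hw')
    omega
  -- the preimage of the hub
  obtain ⟨x, hx⟩ := hsurj none
  -- Step B: at most one walk passes through the hub internally
  have hhub : ∀ e₁ e₂ : K33.E,
      (none ∈ (D.walk e₁).support ∧ none ≠ D.pstart e₁ ∧ none ≠ D.pend e₁) →
      (none ∈ (D.walk e₂).support ∧ none ≠ D.pstart e₂ ∧ none ≠ D.pend e₂) →
      e₁ = e₂ := by
    intro e₁ e₂ h₁ h₂
    by_contra hne
    have hxe₁ : x ∉ K33.ends e₁ := hnotinc x e₁ (hx ▸ h₁.2.1) (hx ▸ h₁.2.2)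
    have hxe₂ : x ∉ K33.ends e₂ := hnotinc x e₂ (hx ▸ h₂.2.1) (hx ▸ h₂.2.2)
    have hm₂ : e₂ ∉ Finset.univ.filter (fun e' => x ∈ K33.ends e') := by
      simp [Finset.mem_filter, hxe₂]
    have hm₁ : e₁ ∉ insert e₂ (Finset.univ.filter (fun e' => x ∈ K33.ends e')) := by
      simp only [Finset.mem_insert, Finset.mem_filter, Finset.mem_univ, true_and]
      push_neg
      exact ⟨hne, hxe₁⟩
    have hsum := D.sum_S_card_le none
      (insert e₁ (insert e₂ (Finset.univ.filter (fun e' => x ∈ K33.ends e'))))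
    rw [hdegnone, Finset.sum_insert hm₁, Finset.sum_insert hm₂] at hsum
    have hc₁ : 2 ≤ (D.S none e₁).card := D.two_le_card_S h₁.1 h₁.2.1 h₁.2.2
    have hc₂ : 2 ≤ (D.S none e₂).card := D.two_le_card_S h₂.1 h₂.2.1 h₂.2.2
    have hge : 3 ≤ ∑ e' ∈ Finset.univ.filter (fun e' => x ∈ K33.ends e'),
        (D.S none e').card := by
      calc 3 = ∑ _e' ∈ Finset.univ.filter (fun e' => x ∈ K33.ends e'), 1 := by
            rw [Finset.sum_const, smul_eq_mul, mul_one, hinc3 x]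
        _ ≤ _ := by
            apply Finset.sum_le_sum
            intro e' he'
            have hw' : x ∈ K33.ends e' := (Finset.mem_filter.mp he').2
            exact D.one_le_card_S (hx ▸ D.vmap_endpoint hw')
    omega
  -- endpoints of walks for edges avoiding x are rim vertices
  have hpsome : ∀ e : K33.E, x ∉ K33.ends e →
      D.pstart e ≠ none ∧ D.pend e ≠ none := by
    intro e hxe
    constructor
    · intro h0
      rcases D.vmap_endpoint (show (Sum.inl e.1 : K33.V) ∈ K33.ends e by
          show _ ∈ s(Sum.inl e.1, Sum.inr e.2); simp) with h | h
      · -- vmap (inl e.1) = pstart e = none = vmap x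
        have : (Sum.inl e.1 : K33.V) = x := hinj (by rw [h, h0, hx])
        apply hxe
        rw [← this]
        show _ ∈ s(Sum.inl e.1, Sum.inr e.2); simp
      · -- then the other endpoint is pstart? need: also pend could be none? no:
        -- pend e = vmap (inl e.1); pstart e = none; none = vmap x;
        -- s(pstart,pend) = s(vmap inl, vmap inr) so pstart ∈ that pair
        have hmem : D.pstart e = D.vmap (Sum.inl e.1) ∨ D.pstart e = D.vmap (Sum.inr e.2) := by
          have := hends e
          rw [Sym2.eq_iff] at this
          rcases this with ⟨h1, _⟩ | ⟨h1, _⟩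
          · exact Or.inl h1
          · exact Or.inr h1
        rcases hmem with h1 | h1
        · have : (Sum.inl e.1 : K33.V) = x := hinj (by rw [← h1, h0, hx])
          apply hxe; rw [← this]
          show _ ∈ s(Sum.inl e.1, Sum.inr e.2); simp
        · have : (Sum.inr e.2 : K33.V) = x := hinj (by rw [← h1, h0, hx])
          apply hxe; rw [← this]
          show _ ∈ s(Sum.inl e.1, Sum.inr e.2); simp
    · intro h0
      have hmem : D.pend e = D.vmap (Sum.inl e.1) ∨ D.pend e = D.vmap (Sum.inr e.2) := by
        have := hends e
        rw [Sym2.eq_iff] at this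
        rcases this with ⟨_, h1⟩ | ⟨_, h1⟩
        · exact Or.inr h1
        · exact Or.inl h1
      rcases hmem with h1 | h1
      · have : (Sum.inl e.1 : K33.V) = x := hinj (by rw [← h1, h0, hx])
        apply hxe; rw [← this]
        show _ ∈ s(Sum.inl e.1, Sum.inr e.2); simp
      · have : (Sum.inr e.2 : K33.V) = x := hinj (by rw [← h1, h0, hx])
        apply hxe; rw [← this]
        show _ ∈ s(Sum.inl e.1, Sum.inr e.2); simp
  -- Step C: classification
  have hclass : ∀ e : K33.E, x ∉ K33.ends e →
      ¬ (none ∈ (D.walk e).support ∧ none ≠ D.pstart e ∧ none ≠ D.pend e) →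
      ∃ i : Fin 5, (D.walk e).edges = [Sum.inl i] ∧
        s(some i, some (i+1)) = s(D.pstart e, D.pend e) := by
    intro e hxe hnh
    obtain ⟨hps, hpe⟩ := hpsome e hxe
    have hne := D.pstart_ne_pend e
    have hmem : none ∉ (D.walk e).support := by
      intro hm
      exact hnh ⟨hm, fun h => hps h.symm, fun h => hpe h.symm⟩
    have hs : ∀ z ∈ (D.walk e).support,
        z = D.pstart e ∨ z = D.pend e ∨ z = (none : Option (Fin 5)) := by
      intro z hz
      match z with
      | none => exact absurd hz hmem
      | some j =>
        rcases hrim e j hz with h | h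
        · exact Or.inl h
        · exact Or.inr (Or.inl h)
    rcases (D.walk e).structure_three (D.isPath e) hne
        (fun h => hps h.symm) (fun h => hpe h.symm) hs with
      ⟨g, hg, hgends⟩ | ⟨g₁, g₂, hg, h1, h2⟩
    · match g with
      | Sum.inl i =>
        refine ⟨i, hg, ?_⟩
        rw [← hgends]; rfl
      | Sum.inr i =>
        exfalso
        have : W5.ends (Sum.inr i) = s(none, some i) := rfl
        rw [this] at hgends; replace hgends := Sym2.eq_iff.mp hgends
        rcases hgends with ⟨ha, _⟩ | ⟨ha, _⟩
        · exact hps ha.symm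
        · exact hpe ha.symm
    · exfalso
      apply hmem
      apply (D.walk e).mem_support_of_mem_edges (g := g₁) (by simp [hg])
      rw [h1]; exact Sym2.mem_mk_right _ _
  -- the set of "good" edges
  classical
  let R : Finset K33.E := Finset.univ.filter (fun e => x ∉ K33.ends e ∧
    ¬ (none ∈ (D.walk e).support ∧ none ≠ D.pstart e ∧ none ≠ D.pend e))
  have hR5 : 5 ≤ R.card := by
    have hsplit := Finset.card_filter_add_card_filter_not
      (s := Finset.univ.filter (fun e : K33.E => x ∉ K33.ends e))
      (p := fun e => none ∈ (D.walk e).support ∧ none ≠ D.pstart e ∧ none ≠ D.pend e)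
    have hone : ((Finset.univ.filter (fun e : K33.E => x ∉ K33.ends e)).filter
        (fun e => none ∈ (D.walk e).support ∧ none ≠ D.pstart e ∧ none ≠ D.pend e)).card ≤ 1 := by
      apply Finset.card_le_one.mpr
      intro a ha b hb
      exact hhub a b (Finset.mem_filter.mp ha).2 (Finset.mem_filter.mp hb).2
    have hReq : R = (Finset.univ.filter (fun e : K33.E => x ∉ K33.ends e)).filter
        (fun e => ¬ (none ∈ (D.walk e).support ∧ none ≠ D.pstart e ∧ none ≠ D.pend e)) := by
      ext e
      simp only [R, Finset.mem_filter, Finset.mem_univ, true_and, and_assoc]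
    rw [hninc6 x] at hsplit
    rw [hReq]
    omega
  -- the rim edge selected by each good edge
  let σ : K33.E → Fin 5 := fun e =>
    match (D.walk e).edges with
    | [Sum.inl i] => i
    | _ => 0
  have hσ : ∀ e ∈ R, (D.walk e).edges = [Sum.inl (σ e)] ∧
      s(some (σ e), some (σ e + 1)) = s(D.pstart e, D.pend e) := by
    intro e he
    simp only [R, Finset.mem_filter, Finset.mem_univ, true_and] at he
    obtain ⟨i, hgi, hi⟩ := hclass e he.1 he.2
    have hσe : σ e = i := by simp only [σ, hgi]
    rw [hσe]
    exact ⟨hgi, hi⟩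
  have hinjOn : Set.InjOn σ R := by
    intro a ha b hb hab
    by_contra hne
    have h1 := (hσ a ha).1
    have h2 := (hσ b hb).1
    refine D.edgeDisj a b hne (a := Sum.inl (σ a)) ?_ ?_
    · rw [h1]; exact List.mem_singleton_self _
    · rw [h2, ← hab]; exact List.mem_singleton_self _
  have himage : R.image σ = Finset.univ := by
    have h1 : (R.image σ).card ≤ 5 := by
      simpa using Finset.card_le_univ (R.image σ)
    rw [Finset.card_image_of_injOn hinjOn] at h1
    apply Finset.eq_univ_of_card
    rw [Finset.card_image_of_injOn hinjOn, Fintype.card_fin]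
    omega
  -- extract the 2-coloring contradiction
  let c : Fin 5 → Bool := fun j => decide (∃ a : Fin 3, D.vmap (Sum.inl a) = some j)
  have hc : ∀ i : Fin 5, c i ≠ c (i + 1) := by
    intro i
    have hi : i ∈ R.image σ := by rw [himage]; exact Finset.mem_univ i
    obtain ⟨e, heR, hei⟩ := Finset.mem_image.mp hi
    have hP := (hσ e heR).2
    rw [hei] at hP
    rw [hends e] at hP; replace hP := Sym2.eq_iff.mp hP
    have hfalse : ∀ j : Fin 5, D.vmap (Sum.inr e.2) = some j →
        c j = false := by
      intro j hj
      apply decide_eq_false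
      rintro ⟨a, ha⟩
      have : (Sum.inl a : K33.V) = Sum.inr e.2 := hinj (ha.trans hj.symm)
      exact Sum.inl_ne_inr this
    have htrue : ∀ j : Fin 5, D.vmap (Sum.inl e.1) = some j →
        c j = true := by
      intro j hj
      exact decide_eq_true ⟨e.1, hj⟩
    rcases hP with ⟨h1, h2⟩ | ⟨h1, h2⟩
    · rw [htrue i h1.symm, hfalse (i+1) h2.symm]
      simp
    · rw [htrue (i+1) h2.symm, hfalse i h1.symm]
      simp
  exact absurd ⟨c, hc⟩ (by decide : ¬ ∃ c : Fin 5 → Bool, ∀ i : Fin 5, c i ≠ c (i + 1))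

end Multigraph

namespace Multigraph

lemma immerses_of_containsSubdivision {H G : Multigraph} (h : ContainsSubdivision H G) :
    Immerses H G := by
  obtain ⟨S⟩ := h
  exact ⟨S.toImmersionData⟩

lemma W5_planar : W5.Planar := by
  constructor
  · intro h
    exact not_immerses_K5 (immerses_of_containsSubdivision h)
  · intro h
    exact not_immerses_K33 (immerses_of_containsSubdivision h)

end Multigraph

open Multigraph in
/-- The wheel with five spokes is weakly 5-edge-connected (in particular
internally 4-edge-connected), planar, not 3-regular, and contains no immersion
of `K_{3,3}`. -/
theorem W5_properties :
    W5.Weakly5EC ∧ W5.Planar ∧ ¬ W5.IsRegular 3 ∧ ¬ Immerses K33 W5 := by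
  refine ⟨⟨⟨by unfold EdgeConnGe; decide, by decide⟩, by decide⟩, W5_planar,
    fun h => absurd (h none) (by decide), not_immerses_K33⟩
end
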